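/- arXiv:1105.5763 — 2 statements merged into one kernel-verified Lean document; each statement's English description precedes it below -/
import Mathlib

section
/- Let σ ∈ S_n. Then σ ≼ c holds if and only if the following two conditions hold: (1) every cycle of σ carries the cyclic order induced by c, i.e. for every x with σ(x) ≠ x one has σ(x) = min{y ∈ C_σ(x) : y > x} if x < max C_σ(x), and σ(x) = min C_σ(x) if x = max C_σ(x); (2) the cycles of σ form a non-crossing partition of {1,…,n}: there exist no 1 ≤ p < q < r < s ≤ n such that p and r belong to one cycle of σ and q and s belong to a different cycle of σ. -/
/-- ℓ(σ): the number of cycles (orbits) of σ, including fixed points, counted via the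
minimal representative of each orbit. -/
noncomputable def cycleCount {n : ℕ} (σ : Equiv.Perm (Fin n)) : ℕ :=
  Set.ncard {x : Fin n | ∀ y, σ.SameCycle x y → x ≤ y}

/-- |σ| := n − ℓ(σ). -/
noncomputable def normPerm {n : ℕ} (σ : Equiv.Perm (Fin n)) : ℕ := n - cycleCount σ

/-- σ₁ ≼ σ₂ iff |σ₂| = |σ₁| + |σ₁⁻¹σ₂|. -/
def precLe {n : ℕ} (σ₁ σ₂ : Equiv.Perm (Fin n)) : Prop :=
  normPerm σ₂ = normPerm σ₁ + normPerm (σ₁⁻¹ * σ₂)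

/-- Σ_n(k): tuples of k transpositions with |τ₁⋯τ_k| = k and τ₁⋯τ_k ≼ (1 … n). -/
def SigmaSet (n k : ℕ) : Set (Fin k → Equiv.Perm (Fin n)) :=
  {τ | (∀ l, (τ l).IsSwap) ∧ normPerm (List.ofFn τ).prod = k ∧
      precLe (List.ofFn τ).prod (finRotate n)}

/-- γ_m := τ₁∘⋯∘τ_m, the product of the first m entries of the chain. -/
def gammaP {n k : ℕ} (τ : Fin k → Equiv.Perm (Fin n)) (m : ℕ) : Equiv.Perm (Fin n) :=
  ((List.ofFn τ).take m).prod

open Equiv Equiv.Perm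

namespace NC

variable {n : ℕ}

theorem _root_.Equiv.Perm.inv_apply_self' {α : Type*} (f : Equiv.Perm α) (x : α) : f⁻¹ (f x) = x :=
  f.symm_apply_apply x

theorem _root_.Equiv.Perm.apply_inv_self' {α : Type*} (f : Equiv.Perm α) (x : α) : f (f⁻¹ x) = x :=
  f.apply_symm_apply x

lemma scp {π : Equiv.Perm (Fin n)} {x y : Fin n} {i : ℕ} (h : (π ^ i) x = y) :
    π.SameCycle x y := ⟨i, by simpa using h⟩

lemma sc_apply (π : Equiv.Perm (Fin n)) (x : Fin n) : π.SameCycle x (π x) :=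
  scp (i := 1) (by simp)

lemma sc_closure {π : Equiv.Perm (Fin n)} {R : Fin n → Fin n → Prop}
    (hrefl : ∀ x, R x x) (htrans : ∀ {x y z}, R x y → R y z → R x z)
    (hstep : ∀ x, R x (π x)) {x y : Fin n} (h : π.SameCycle x y) : R x y := by
  obtain ⟨i, -, rfl⟩ := h.exists_pow_eq'
  clear h
  have key : ∀ (i : ℕ) (x : Fin n), R x ((π ^ i) x) := by
    intro i
    induction i with
    | zero => simpa using hrefl
    | succ k ih =>
      intro x
      rw [pow_succ, Perm.mul_apply]
      exact htrans (hstep x) (ih (π x))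
  exact key i x

/-- crux: multiplying by swap a b when a,b in different cycles connects a and b -/
lemma crux {π : Equiv.Perm (Fin n)} {a b : Fin n}
    (h : ¬ π.SameCycle a b) : (swap a b * π).SameCycle a b := by
  have hab : a ≠ b := fun e => h (e ▸ Equiv.Perm.SameCycle.refl _ _)
  set f := swap a b * π with hf
  have hfap : ∀ z, f z = swap a b (π z) := fun z => rfl
  by_cases hfa : π a = a
  · exact scp (i := 1) (by simp [hf, Perm.mul_apply, hfa])
  have hpab : π a ≠ b := fun e => h (e ▸ sc_apply π a)
  have hk2 : 2 ≤ orderOf f := by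
    by_contra hlt
    have h1 : orderOf f = 1 ∨ orderOf f = 0 := by omega
    have hford : f = 1 := by
      rcases h1 with h1 | h1
      · exact orderOf_eq_one_iff.mp h1
      · exact absurd h1 (orderOf_pos f).ne'
    have : swap a b (π a) = a := by
      have : f a = a := by rw [hford]; rfl
      rwa [hfap] at this
    rw [swap_apply_of_ne_of_ne hfa hpab] at this
    exact hfa this
  have hJex : ∃ j, 1 ≤ j ∧ ((f ^ j) a = π⁻¹ a ∨ (f ^ j) a = π⁻¹ b) := by
    refine ⟨orderOf f - 1, by omega, Or.inr ?_⟩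
    have h2 : f ((f ^ (orderOf f - 1)) a) = a := by
      rw [← Perm.mul_apply, ← pow_succ', show orderOf f - 1 + 1 = orderOf f by omega,
        pow_orderOf_eq_one]; rfl
    have h3 : (f ^ (orderOf f - 1)) a = f⁻¹ a := (Perm.eq_inv_iff_eq (f := f)).mpr h2
    rw [h3, hf, mul_inv_rev]
    simp [Perm.mul_apply]
  classical
  set j := Nat.find hJex with hjdef
  obtain ⟨hj1, hjor⟩ := Nat.find_spec hJex
  rw [← hjdef] at hjor
  have hjmin : ∀ i, i < j → ¬ (1 ≤ i ∧ ((f ^ i) a = π⁻¹ a ∨ (f ^ i) a = π⁻¹ b)) :=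
    fun i hi => Nat.find_min hJex hi
  have claim : ∀ i, i < j → (f ^ i) a = (π ^ i) a := by
    intro i
    induction i with
    | zero => simp
    | succ k ih =>
      intro hk1
      have hk : k < j := Nat.lt_of_succ_lt hk1
      have ihk := ih hk
      rw [pow_succ', Perm.mul_apply, ihk, hfap, pow_succ', Perm.mul_apply]
      set z := π ((π ^ k) a) with hzdef
      have hzz : (π ^ (k+1)) a = z := by rw [pow_succ', Perm.mul_apply]
      have hz2 : z ≠ b := fun e => h (scp (i := k+1) (hzz.trans e))
      have hz1 : z ≠ a := by
        intro hza
        have hka : (π ^ k) a = π⁻¹ a := by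
          have : π⁻¹ ((π ^ (k+1)) a) = π⁻¹ a := by rw [hzz, hza]
          rwa [pow_succ', Perm.mul_apply, Perm.inv_apply_self'] at this
        rcases Nat.eq_zero_or_pos k with rfl | hkpos
        · apply hfa
          have : (π ^ 1) a = z := by simpa using hzz
          simpa [hza] using this
        · exact hjmin k hk ⟨hkpos, Or.inl (ihk.trans hka)⟩
      exact swap_apply_of_ne_of_ne hz1 hz2
  have hprev : (f ^ (j-1)) a = (π ^ (j-1)) a := claim _ (by omega)
  have hfj : (f ^ j) a = swap a b ((π ^ j) a) := by
    rw [show j = (j-1)+1 by omega, pow_succ', Perm.mul_apply, hprev, hfap,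
      pow_succ', Perm.mul_apply]
  by_cases hza : (π ^ j) a = a
  · exact scp (i := j) (by rw [hfj, hza, swap_apply_left])
  by_cases hzb : (π ^ j) a = b
  · exact absurd (scp hzb) h
  · have hfj2 : (f ^ j) a = (π ^ j) a := by
      rw [hfj, swap_apply_of_ne_of_ne hza hzb]
    rcases hjor with h1 | h1
    · refine scp (i := j + 1) ?_
      rw [pow_succ', Perm.mul_apply, h1, hfap, Perm.apply_inv_self', swap_apply_left]
    · exfalso
      apply h
      have : (π ^ j) a = π⁻¹ b := hfj2.symm.trans h1
      have h2 : (π ^ (j+1)) a = b := by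
        rw [pow_succ', Perm.mul_apply, this, Perm.apply_inv_self']
      exact scp h2


/-! ### merge / split package -/

def Jrel (π : Equiv.Perm (Fin n)) (a b x y : Fin n) : Prop :=
  π.SameCycle x y ∨ (π.SameCycle x a ∧ π.SameCycle b y) ∨ (π.SameCycle x b ∧ π.SameCycle a y)

lemma jrel_refl (π : Equiv.Perm (Fin n)) (a b x : Fin n) : Jrel π a b x x :=
  Or.inl (Equiv.Perm.SameCycle.refl _ _)

lemma jrel_trans {π : Equiv.Perm (Fin n)} {a b : Fin n} (h : ¬ π.SameCycle a b)
    {x y z : Fin n} (h1 : Jrel π a b x y) (h2 : Jrel π a b y z) : Jrel π a b x z := by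
  rcases h1 with h1 | ⟨h1, h1'⟩ | ⟨h1, h1'⟩ <;> rcases h2 with h2 | ⟨h2, h2'⟩ | ⟨h2, h2'⟩
  · exact Or.inl (h1.trans h2)
  · exact Or.inr (Or.inl ⟨h1.trans h2, h2'⟩)
  · exact Or.inr (Or.inr ⟨h1.trans h2, h2'⟩)
  · exact Or.inr (Or.inl ⟨h1, h1'.trans h2⟩)
  · exact absurd (h1'.trans h2).symm h
  · exact Or.inl (h1.trans h2')
  · exact Or.inr (Or.inr ⟨h1, h1'.trans h2⟩)
  · exact Or.inl (h1.trans h2')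
  · exact absurd (h1'.trans h2) h

lemma jrel_step {π : Equiv.Perm (Fin n)} {a b : Fin n} (x : Fin n) :
    Jrel π a b x ((swap a b * π) x) := by
  rcases eq_or_ne (π x) a with hxa | hxa
  · have : (swap a b * π) x = b := by rw [Perm.mul_apply, hxa, swap_apply_left]
    rw [this]
    exact Or.inr (Or.inl ⟨hxa ▸ sc_apply π x, Equiv.Perm.SameCycle.refl _ _⟩)
  rcases eq_or_ne (π x) b with hxb | hxb
  · have : (swap a b * π) x = a := by rw [Perm.mul_apply, hxb, swap_apply_right]
    rw [this]
    exact Or.inr (Or.inr ⟨hxb ▸ sc_apply π x, Equiv.Perm.SameCycle.refl _ _⟩)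
  · have : (swap a b * π) x = π x := by rw [Perm.mul_apply, swap_apply_of_ne_of_ne hxa hxb]
    rw [this]
    exact Or.inl (sc_apply π x)

lemma sc_mono {π : Equiv.Perm (Fin n)} {a b x y : Fin n} (h : ¬ π.SameCycle a b)
    (hxy : π.SameCycle x y) : (swap a b * π).SameCycle x y := by
  refine sc_closure (π := π) (R := (swap a b * π).SameCycle)
    (fun x => Equiv.Perm.SameCycle.refl _ _) (fun h1 h2 => h1.trans h2) ?_ hxy
  intro z
  rcases eq_or_ne (π z) a with hza | hza
  · have h1 : (swap a b * π) z = b := by rw [Perm.mul_apply, hza, swap_apply_left]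
    have h2 := sc_apply (swap a b * π) z
    rw [h1] at h2
    rw [hza]
    exact h2.trans (crux h).symm
  rcases eq_or_ne (π z) b with hzb | hzb
  · have h1 : (swap a b * π) z = a := by rw [Perm.mul_apply, hzb, swap_apply_right]
    have h2 := sc_apply (swap a b * π) z
    rw [h1] at h2
    rw [hzb]
    exact h2.trans (crux h)
  · have h1 : (swap a b * π) z = π z := by rw [Perm.mul_apply, swap_apply_of_ne_of_ne hza hzb]
    exact h1 ▸ sc_apply _ z

/-- The merge description of cycles of `swap a b * π`. -/
lemma sc_swap_mul_iff {π : Equiv.Perm (Fin n)} {a b : Fin n} (h : ¬ π.SameCycle a b)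
    (x y : Fin n) : (swap a b * π).SameCycle x y ↔ Jrel π a b x y := by
  constructor
  · exact fun hxy => sc_closure (jrel_refl π a b) (fun h1 h2 => jrel_trans h h1 h2)
      jrel_step hxy
  · rintro (h1 | ⟨h1, h2⟩ | ⟨h1, h2⟩)
    · exact sc_mono h h1
    · exact ((sc_mono h h1).trans (crux h)).trans (sc_mono h h2)
    · exact ((sc_mono h h1).trans (crux h).symm).trans (sc_mono h h2)

/-! ### minimal representatives and counting -/

def mreps (π : Equiv.Perm (Fin n)) : Set (Fin n) := {x | ∀ y, π.SameCycle x y → x ≤ y}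

lemma cycleCount_def' (π : Equiv.Perm (Fin n)) : cycleCount π = (mreps π).ncard := rfl

open scoped Classical in
lemma mrep_exists (π : Equiv.Perm (Fin n)) (x : Fin n) :
    ∃ m, π.SameCycle x m ∧ m ∈ mreps π := by
  classical
  set F : Finset (Fin n) := Finset.univ.filter (fun y => π.SameCycle x y) with hF
  have hne : F.Nonempty := ⟨x, by simpa [hF] using Equiv.Perm.SameCycle.refl π x⟩
  have hmem : ∀ {y}, y ∈ F ↔ π.SameCycle x y := by intro y; simp [hF]
  refine ⟨F.min' hne, hmem.mp (F.min'_mem hne), ?_⟩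
  intro y hy
  exact F.min'_le y (hmem.mpr ((hmem.mp (F.min'_mem hne)).trans hy))

lemma mrep_unique {π : Equiv.Perm (Fin n)} {m m' : Fin n} (h1 : m ∈ mreps π)
    (h2 : m' ∈ mreps π) (h : π.SameCycle m m') : m = m' :=
  le_antisymm (h1 _ h) (h2 _ h.symm)

lemma cycleCount_swap_mul {π : Equiv.Perm (Fin n)} {a b : Fin n} (h : ¬ π.SameCycle a b) :
    cycleCount (swap a b * π) + 1 = cycleCount π := by
  obtain ⟨ma, hsca, hma⟩ := mrep_exists π a
  obtain ⟨mb, hscb, hmb⟩ := mrep_exists π b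
  have hmamb : ¬ π.SameCycle ma mb := fun hc => h (hsca.trans (hc.trans hscb.symm))
  have main : ∀ (a b ma mb : Fin n), ¬ π.SameCycle a b → π.SameCycle a ma → ma ∈ mreps π →
      π.SameCycle b mb → mb ∈ mreps π → ma ≤ mb →
      mreps (swap a b * π) = mreps π \ {mb} := by
    clear h hsca hma hscb hmb hmamb ma mb
    intro a b ma mb h hsca hma hscb hmb hle
    have hmamb : ¬ π.SameCycle ma mb := fun hc => h (hsca.trans (hc.trans hscb.symm))
    ext x
    constructor
    · intro hx
      refine ⟨fun y hy => hx y (sc_mono h hy), ?_⟩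
      intro hxmb
      simp only [Set.mem_singleton_iff] at hxmb
      subst hxmb
      have h1 : (swap a b * π).SameCycle x ma :=
        (sc_swap_mul_iff h _ _).mpr (Or.inr (Or.inr ⟨hscb.symm, hsca⟩))
      cases le_antisymm hle (hx ma h1)
      exact hmamb (Equiv.Perm.SameCycle.refl _ _)
    · rintro ⟨hx, hxne⟩
      simp only [Set.mem_singleton_iff] at hxne
      intro y hy
      rcases (sc_swap_mul_iff h _ _).mp hy with h1 | ⟨h1, h2⟩ | ⟨h1, h2⟩
      · exact hx y h1
      · have hxma : x = ma := mrep_unique hx hma (h1.trans hsca)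
        have : mb ≤ y := hmb y (hscb.symm.trans h2)
        exact le_trans (hxma ▸ hle) this
      · exact absurd (mrep_unique hx hmb (h1.trans hscb)) hxne
  rcases le_total ma mb with hle | hle
  · rw [cycleCount_def', cycleCount_def', main a b ma mb h hsca hma hscb hmb hle]
    exact Set.ncard_diff_singleton_add_one hmb (Set.toFinite _)
  · rw [cycleCount_def', cycleCount_def', swap_comm,
      main b a mb ma (fun hc => h hc.symm) hscb hmb hsca hma hle]
    exact Set.ncard_diff_singleton_add_one hma (Set.toFinite _)

/-- split: if a,b are in the same cycle of π, then swap a b * π separates them -/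
lemma not_sc_swap_mul {π : Equiv.Perm (Fin n)} {a b : Fin n} (hab : a ≠ b)
    (h : π.SameCycle a b) : ¬ (swap a b * π).SameCycle a b := by
  classical
  have hex : ∃ i, 1 ≤ i ∧ (π ^ i) a = b := by
    obtain ⟨i, -, hi⟩ := h.exists_pow_eq'
    refine ⟨i, ?_, hi⟩
    rcases Nat.eq_zero_or_pos i with rfl | hpos
    · simp at hi; exact absurd hi hab
    · exact hpos
  set m := Nat.find hex with hmdef
  obtain ⟨hm1, hmb⟩ := Nat.find_spec hex
  rw [← hmdef] at hmb
  have hmin : ∀ i, i < m → ¬ (1 ≤ i ∧ (π ^ i) a = b) := fun i hi => Nat.find_min hex hi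
  set Q : Fin n → Prop := fun z => ∃ i, i < m ∧ (π ^ i) a = z with hQ
  have hQa : Q a := ⟨0, hm1, by simp⟩
  have hQb : ¬ Q b := by
    rintro ⟨i, him, hib⟩
    rcases Nat.eq_zero_or_pos i with rfl | hpos
    · simp at hib; exact hab hib
    · exact hmin i him ⟨hpos, hib⟩
  have hclosed : ∀ z, Q z → Q ((swap a b * π) z) := by
    rintro z ⟨i, him, rfl⟩
    rcases eq_or_ne (i + 1) m with he | hne
    · have hπz : π ((π ^ i) a) = b := by
        rw [← Perm.mul_apply, ← pow_succ', he, hmb]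
      refine ⟨0, hm1, ?_⟩
      rw [Perm.mul_apply, hπz, swap_apply_right]
      simp
    · have him1 : i + 1 < m := by omega
      have hz1 : (π ^ (i+1)) a ≠ b := fun hc => hmin (i+1) him1 ⟨by omega, hc⟩
      have hz2 : (π ^ (i+1)) a ≠ a := by
        intro hc
        have hstep : (π ^ (m - i - 1)) a = b := by
          have : (π ^ (m - i - 1)) ((π ^ (i+1)) a) = b := by
            rw [← Perm.mul_apply, ← pow_add, show m - i - 1 + (i+1) = m by omega, hmb]
          rwa [hc] at this
        rcases Nat.eq_zero_or_pos (m - i - 1) with hzero | hpos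
        · rw [hzero] at hstep; simp at hstep; exact hab hstep
        · exact hmin _ (by omega) ⟨hpos, hstep⟩
      refine ⟨i + 1, him1, ?_⟩
      rw [Perm.mul_apply, ← Perm.mul_apply π, ← pow_succ',
        swap_apply_of_ne_of_ne hz2 hz1]
  intro hsc
  obtain ⟨k, -, hk⟩ := hsc.exists_pow_eq'
  apply hQb
  rw [← hk]
  have key : ∀ j, Q (((swap a b * π) ^ j) a) := by
    intro j
    induction j with
    | zero => simpa using hQa
    | succ j ih =>
      rw [pow_succ', Perm.mul_apply]
      exact hclosed _ ih
  exact key k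

lemma cycleCount_swap_mul_sc {π : Equiv.Perm (Fin n)} {a b : Fin n} (hab : a ≠ b)
    (h : π.SameCycle a b) : cycleCount π + 1 = cycleCount (swap a b * π) := by
  have h2 := not_sc_swap_mul hab h
  have h3 := cycleCount_swap_mul (π := swap a b * π) (a := a) (b := b) h2
  rwa [← mul_assoc, swap_mul_self, one_mul] at h3

lemma cycleCount_swap_bounds {π s : Equiv.Perm (Fin n)} (hs : s.IsSwap) :
    cycleCount π ≤ cycleCount (s * π) + 1 ∧ cycleCount (s * π) ≤ cycleCount π + 1 := by
  obtain ⟨a, b, hab, rfl⟩ := hs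
  by_cases h : π.SameCycle a b
  · have := cycleCount_swap_mul_sc hab h
    omega
  · have := cycleCount_swap_mul h
    omega

/-! ### counting basics -/

lemma cycleCount_le (π : Equiv.Perm (Fin n)) : cycleCount π ≤ n := by
  rw [cycleCount_def']
  calc (mreps π).ncard ≤ (Set.univ : Set (Fin n)).ncard :=
        Set.ncard_le_ncard (Set.subset_univ _) Set.finite_univ
    _ = n := by simp [Set.ncard_univ]

lemma cycleCount_one : cycleCount (1 : Equiv.Perm (Fin n)) = n := by
  rw [cycleCount_def']
  have : mreps (1 : Equiv.Perm (Fin n)) = Set.univ := by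
    ext x
    simp only [mreps, Set.mem_setOf_eq, Set.mem_univ, iff_true]
    intro y hy
    rw [Equiv.Perm.sameCycle_one] at hy
    exact hy.le
  simp [this, Set.ncard_univ]

lemma eq_one_of_cycleCount {π : Equiv.Perm (Fin n)} (h : cycleCount π = n) : π = 1 := by
  have huniv : mreps π = Set.univ := by
    apply Set.eq_of_subset_of_ncard_le (Set.subset_univ _)
    rw [Set.ncard_univ]
    simp [← cycleCount_def', h]
  ext x
  have h1 : x ∈ mreps π := huniv ▸ Set.mem_univ x
  have h2 : π x ∈ mreps π := huniv ▸ Set.mem_univ (π x)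
  simp only [Equiv.Perm.coe_one, id_eq]
  exact le_antisymm (h2 x (sc_apply π x).symm) (h1 (π x) (sc_apply π x))

lemma exists_ne_of_ne_one {π : Equiv.Perm (Fin n)} (h : π ≠ 1) : ∃ x, π x ≠ x := by
  by_contra hc
  push_neg at hc
  exact h (Equiv.ext fun x => hc x)

lemma cycleCount_lt_of_ne_one {π : Equiv.Perm (Fin n)} (h : π ≠ 1) : cycleCount π < n :=
  lt_of_le_of_ne (cycleCount_le π) fun e => h (eq_one_of_cycleCount e)

/-! ### subadditivity -/

lemma subadd (σ ψ : Equiv.Perm (Fin n)) :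
    cycleCount σ + cycleCount ψ ≤ n + cycleCount (σ * ψ) := by
  suffices H : ∀ k (σ ψ : Equiv.Perm (Fin n)), n - cycleCount σ ≤ k →
      cycleCount σ + cycleCount ψ ≤ n + cycleCount (σ * ψ) from
    H (n - cycleCount σ) σ ψ le_rfl
  intro k
  induction k with
  | zero =>
    intro σ ψ hk
    have h1 : cycleCount σ = n := le_antisymm (cycleCount_le σ) (by omega)
    have h2 : σ = 1 := eq_one_of_cycleCount h1
    subst h2
    rw [one_mul, h1]
  | succ k ih =>
    intro σ ψ hk
    rcases eq_or_ne σ 1 with rfl | hne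
    · rw [one_mul, cycleCount_one]
    obtain ⟨x, hx⟩ := exists_ne_of_ne_one hne
    set s := swap x (σ x) with hs
    have hsswap : s.IsSwap := ⟨x, σ x, Ne.symm hx, rfl⟩
    have hsplit : cycleCount σ + 1 = cycleCount (s * σ) :=
      cycleCount_swap_mul_sc (Ne.symm hx) (sc_apply σ x)
    have hlt : cycleCount σ < n := cycleCount_lt_of_ne_one hne
    have hmeas : n - cycleCount (s * σ) ≤ k := by omega
    have hIH := ih (s * σ) ψ hmeas
    have hbound := (cycleCount_swap_bounds (π := σ * ψ) hsswap).2
    rw [mul_assoc] at hIH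
    omega

lemma prod_swaps_bound : ∀ L : List (Equiv.Perm (Fin n)), (∀ s ∈ L, s.IsSwap) →
    n ≤ cycleCount L.prod + L.length := by
  intro L
  induction L with
  | nil => intro _; simp [cycleCount_one]
  | cons s L ih =>
    intro hL
    have h1 := ih (fun t ht => hL t (List.mem_cons_of_mem s ht))
    have h2 := (cycleCount_swap_bounds (π := L.prod) (hL s (List.mem_cons_self))).1
    rw [List.prod_cons]
    simp only [List.length_cons]
    omega

/-! ### finRotate facts -/

open Fin.NatCast in
lemma rot_pow (k : ℕ) (x : Fin (n+1)) : ((finRotate (n+1)) ^ k) x = x + (k : Fin (n+1)) := by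
  induction k with
  | zero => simp
  | succ j ih =>
    rw [pow_succ', Perm.mul_apply, ih, finRotate_succ_apply]
    push_cast
    rw [add_assoc]

open Fin.NatCast in
lemma sc_rot (x y : Fin (n+1)) : (finRotate (n+1)).SameCycle x y := by
  refine scp (i := y.val + (n+1) - x.val) ?_
  rw [rot_pow]
  apply Fin.ext
  simp only [Fin.add_def, Fin.val_natCast]
  rw [Nat.add_mod_mod,
    show x.val + (y.val + (n+1) - x.val) = y.val + (n+1) by omega,
    Nat.add_mod_right, Nat.mod_eq_of_lt y.isLt]

lemma cycleCount_finRotate : cycleCount (finRotate (n+1)) = 1 := by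
  rw [cycleCount_def']
  have : mreps (finRotate (n+1)) = {0} := by
    ext x
    simp only [mreps, Set.mem_setOf_eq, Set.mem_singleton_iff]
    constructor
    · intro h
      exact Fin.le_zero_iff.mp (h 0 (sc_rot x 0))
    · rintro rfl y -
      exact Fin.zero_le y
  rw [this, Set.ncard_singleton]

lemma rot_apply_of_lt {x : Fin (n+1)} (h : x.val < n) :
    (finRotate (n+1) x).val = x.val + 1 := by
  rw [finRotate_succ_apply, Fin.val_add_one_of_lt]
  rw [Fin.lt_iff_val_lt_val]
  simpa using h

lemma rot_apply_last : (finRotate (n+1) (Fin.last n)) = 0 := finRotate_last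

/-! ### the combinatorial conditions -/

def Oriented (σ : Equiv.Perm (Fin n)) : Prop := ∀ x, σ x ≠ x →
    ((∃ y, σ.SameCycle x y ∧ x < y) → x < σ x ∧ ∀ y, σ.SameCycle x y → x < y → σ x ≤ y) ∧
    ((∀ y, σ.SameCycle x y → y ≤ x) → ∀ y, σ.SameCycle x y → σ x ≤ y)

def NoCross (σ : Equiv.Perm (Fin n)) : Prop := ¬ ∃ p q r s : Fin n, p < q ∧ q < r ∧ r < s ∧
    σ.SameCycle p r ∧ σ.SameCycle q s ∧ ¬ σ.SameCycle p q

lemma cross {σ : Equiv.Perm (Fin n)} (h : NoCross σ) {p q r s : Fin n} (h1 : p < q)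
    (h2 : q < r) (h3 : r < s) (h4 : σ.SameCycle p r) (h5 : σ.SameCycle q s)
    (h6 : ¬ σ.SameCycle p q) : False := h ⟨p, q, r, s, h1, h2, h3, h4, h5, h6⟩

lemma orient1 {σ : Equiv.Perm (Fin n)} (hO : Oriented σ) {x y : Fin n} (hx : σ x ≠ x)
    (hy : σ.SameCycle x y) (hxy : x < y) :
    x < σ x ∧ ∀ z, σ.SameCycle x z → x < z → σ x ≤ z := (hO x hx).1 ⟨y, hy, hxy⟩

lemma orient2 {σ : Equiv.Perm (Fin n)} (hO : Oriented σ) {x : Fin n} (hx : σ x ≠ x)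
    (hmax : ∀ y, σ.SameCycle x y → y ≤ x) : ∀ y, σ.SameCycle x y → σ x ≤ y :=
  (hO x hx).2 hmax

/-! ### the Kreweras interval relation -/

def Krew (σ : Equiv.Perm (Fin n)) (x y : Fin n) : Prop := ∀ p q, σ.SameCycle p q →
    min x y < p → p ≤ max x y → min x y < q ∧ q ≤ max x y

lemma krew_of_le {σ : Equiv.Perm (Fin n)} {x y : Fin n} (hxy : x ≤ y) :
    Krew σ x y ↔ ∀ p q, σ.SameCycle p q → x < p → p ≤ y → x < q ∧ q ≤ y := by
  unfold Krew
  rw [min_eq_left hxy, max_eq_right hxy]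

lemma krew_refl (σ : Equiv.Perm (Fin n)) (x : Fin n) : Krew σ x x := by
  intro p q _ h1 h2
  simp only [min_self, max_self] at h1 h2
  exact absurd (lt_of_lt_of_le h1 h2) (lt_irrefl x)

lemma krew_symm {σ : Equiv.Perm (Fin n)} {x y : Fin n} (h : Krew σ x y) : Krew σ y x := by
  unfold Krew at h ⊢
  rwa [min_comm, max_comm]

lemma krew_trans {σ : Equiv.Perm (Fin n)} {x y z : Fin n} (h1 : Krew σ x y)
    (h2 : Krew σ y z) : Krew σ x z := by
  have aux : ∀ x y z : Fin n, Krew σ x y → Krew σ y z → x ≤ z → Krew σ x z := by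
    intro x y z h1 h2 hxz
    rw [krew_of_le hxz]
    intro p q hpq hp1 hp2
    rcases le_total x y with hxy | hyx
    · rcases le_total y z with hyz | hzy
      · -- x ≤ y ≤ z
        rcases le_or_gt p y with hpy | hpy
        · have := (krew_of_le hxy).mp h1 p q hpq hp1 hpy
          exact ⟨this.1, le_trans this.2 hyz⟩
        · have := (krew_of_le hyz).mp h2 p q hpq hpy hp2
          exact ⟨lt_of_le_of_lt hxy this.1, this.2⟩
      · -- z ≤ y : p ∈ (x,z] ⊆ (x,y]
        have := (krew_of_le hxy).mp h1 p q hpq hp1 (le_trans hp2 hzy)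
        refine ⟨this.1, ?_⟩
        by_contra hq
        push_neg at hq
        have h4 := ((krew_of_le hzy).mp (krew_symm h2 : Krew σ z y)) q p hpq.symm hq this.2
        exact absurd hp2 (not_le.mpr h4.1)
    · -- y ≤ x
      have := (krew_of_le (le_trans hyx hxz)).mp h2 p q hpq (lt_of_le_of_lt hyx hp1) hp2
      refine ⟨?_, this.2⟩
      by_contra hq
      push_neg at hq
      have h4 := (krew_of_le hyx |>.mp (krew_symm h1 : Krew σ y x)) q p hpq.symm this.1 hq
      exact absurd hp1 (not_lt.mpr h4.2)
  rcases le_total x z with hxz | hzx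
  · exact aux x y z h1 h2 hxz
  · exact krew_symm (aux z y x (krew_symm h2) (krew_symm h1) hzx)

lemma krew_step {σ : Equiv.Perm (Fin (n+1))} (hO : Oriented σ) (hN : NoCross σ)
    (z : Fin (n+1)) : Krew σ z ((σ⁻¹ * finRotate (n+1)) z) := by
  have hmul : (σ⁻¹ * finRotate (n+1)) z = σ⁻¹ (finRotate (n+1) z) := rfl
  rw [hmul]
  set y := σ⁻¹ (finRotate (n+1) z) with hydef
  have hy : σ y = finRotate (n+1) z := Equiv.Perm.apply_inv_self' σ _
  have hyrot : σ.SameCycle y (finRotate (n+1) z) := by rw [← hy]; exact sc_apply σ y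
  rcases eq_or_ne z y with h | hzy
  · rw [← h]; exact krew_refl σ _
  rcases Nat.lt_or_ge z.val n with hzn | hzn
  · -- main case: rot z = z + 1
    have hrotv : (finRotate (n+1) z).val = z.val + 1 := rot_apply_of_lt hzn
    rcases eq_or_ne (σ y) y with hfix | hfix
    · -- y is a fixed point equal to z+1
      have hyv : y.val = z.val + 1 := by rw [← hrotv, ← hy, hfix]
      have hzyl : z ≤ y := by rw [Fin.le_def]; omega
      rw [krew_of_le hzyl]
      intro p q hpq hp1 hp2
      have hpy : p = y := by
        apply Fin.ext
        rw [Fin.lt_def] at hp1; rw [Fin.le_def] at hp2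
        omega
      have hq : p = q := hpq.eq_of_left (show σ p = p by rw [hpy]; exact hfix)
      rw [← hq]
      exact ⟨hp1, hp2⟩
    · by_cases hmax : ∀ w, σ.SameCycle y w → w ≤ y
      · -- y is the max of its cycle, and z < y
        have h2 := orient2 hO hfix hmax
        have hzley : z < y := by
          have h3 := h2 y (Equiv.Perm.SameCycle.refl _ _)
          rw [hy] at h3
          rw [Fin.le_def, hrotv] at h3
          rw [Fin.lt_def]; omega
        rw [krew_of_le hzley.le]
        intro p q hpq hp1 hp2
        by_cases hpB : σ.SameCycle y p
        · have hq1 : σ.SameCycle y q := hpB.trans hpq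
          have h3 := h2 q hq1
          rw [hy, Fin.le_def, hrotv] at h3
          exact ⟨by rw [Fin.lt_def]; omega, hmax q hq1⟩
        · have hqB : ¬ σ.SameCycle y q := fun hc => hpB (hc.trans hpq.symm)
          have hprot : p ≠ finRotate (n+1) z := by
            intro hc; apply hpB; rw [hc]; exact hyrot
          have hqrot : q ≠ finRotate (n+1) z := by
            intro hc; apply hqB; rw [hc]; exact hyrot
          have hpney : p ≠ y := by
            intro hc; apply hpB; rw [hc]
          have hplty : p < y := lt_of_le_of_ne hp2 hpney
          have hpgt : finRotate (n+1) z < p := by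
            rw [Fin.lt_def, hrotv]
            rw [Fin.lt_def] at hp1
            have : p.val ≠ z.val + 1 := by
              intro hc; apply hprot; apply Fin.ext; rw [hrotv, hc]
            omega
          constructor
          · by_contra hq
            push_neg at hq
            have hqlt : q < finRotate (n+1) z := by
              rw [Fin.lt_def, hrotv]; rw [Fin.le_def] at hq; omega
            exact (cross hN hqlt hpgt hplty hpq.symm hyrot.symm
              (fun hc => hqB (hc.trans hyrot.symm).symm)).elim
          · by_contra hq
            push_neg at hq
            exact (cross hN hpgt hplty hq hyrot.symm hpq
              (fun hc => hpB (hyrot.trans hc))).elim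
      · -- y is not the max of its cycle, so y < σ y = z+1, hence y < z
        push_neg at hmax
        obtain ⟨w, hw, hyw⟩ := hmax
        have h1 := orient1 hO hfix hw hyw
        have hylez : y < z := by
          have h3 := h1.1
          rw [hy, Fin.lt_def, hrotv] at h3
          rw [Fin.lt_def]
          rcases Nat.lt_or_ge y.val z.val with h' | h'
          · exact h'
          · exact absurd (Fin.ext (by omega) : z = y) hzy
        refine krew_symm ?_
        rw [krew_of_le hylez.le]
        intro p q hpq hp1 hp2
        have hpB : ¬ σ.SameCycle y p := by
          intro hc
          have h3 := h1.2 p hc hp1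
          rw [hy, Fin.le_def, hrotv] at h3
          rw [Fin.le_def] at hp2
          omega
        have hqB : ¬ σ.SameCycle y q := fun hc => hpB (hc.trans hpq.symm)
        have hrotgtz : z < finRotate (n+1) z := by rw [Fin.lt_def, hrotv]; omega
        constructor
        · by_contra hq
          push_neg at hq
          have hqney : q ≠ y := by
            intro hc; apply hqB; rw [hc]
          have hqlty : q < y := lt_of_le_of_ne hq hqney
          exact (cross hN hqlty hp1 (lt_of_le_of_lt hp2 hrotgtz) hpq.symm hyrot
            (fun hc => hqB hc.symm)).elim
        · by_contra hq
          push_neg at hq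
          have hqrot : q ≠ finRotate (n+1) z := by
            intro hc; apply hqB; rw [hc]; exact hyrot
          have hqgt : finRotate (n+1) z < q := by
            rw [Fin.lt_def, hrotv]
            rw [Fin.lt_def] at hq
            have : q.val ≠ z.val + 1 := by
              intro hc; apply hqrot; apply Fin.ext; rw [hrotv, hc]
            omega
          exact (cross hN hp1 (lt_of_le_of_lt hp2 hrotgtz) hqgt hyrot hpq
            (fun hc => hpB hc)).elim
  · -- z = last, rot z = 0
    have hzlast : z = Fin.last n := Fin.ext (by have := z.isLt; simp; omega)
    have hrot0 : finRotate (n+1) z = 0 := by rw [hzlast]; exact rot_apply_last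
    rw [hrot0] at hy hyrot
    have hylez : y < z := by
      have hne : y ≠ z := fun e => hzy e.symm
      exact lt_of_le_of_ne (by rw [hzlast]; exact Fin.le_last y) hne
    refine krew_symm ?_
    rw [krew_of_le hylez.le]
    intro p q hpq hp1 hp2
    refine ⟨?_, by rw [hzlast]; exact Fin.le_last q⟩
    rcases eq_or_ne (σ y) y with hfix | hfix
    · have hy0 : y = 0 := by rw [← hy, hfix]
      by_contra hq
      push_neg at hq
      have hqy : q = y := le_antisymm hq (by rw [hy0]; exact Fin.zero_le q)
      have hpy : q = p := Equiv.Perm.SameCycle.eq_of_left hpq.symm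
        (show σ q = q by rw [hqy]; exact hfix)
      rw [← hpy] at hp1
      exact absurd hp1 (not_lt.mpr hq)
    · have hmax : ∀ w, σ.SameCycle y w → w ≤ y := by
        intro w hw
        by_contra hwy
        push_neg at hwy
        have h3 := (orient1 hO hfix hw hwy).1
        rw [hy, Fin.lt_def] at h3
        simp at h3
      have hpB : ¬ σ.SameCycle y p := fun hc => absurd (hmax p hc) (not_le.mpr hp1)
      have hqB : ¬ σ.SameCycle y q := fun hc => hpB (hc.trans hpq.symm)
      by_contra hq
      push_neg at hq
      have hqney : q ≠ y := by
        intro hc; apply hqB; rw [hc]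
      have hqlty : q < y := lt_of_le_of_ne hq hqney
      have hq0 : (0 : Fin (n+1)) < q := by
        rcases eq_or_ne q 0 with rfl | hne
        · exact absurd hyrot hqB
        · exact lt_of_le_of_ne (Fin.zero_le q) (Ne.symm hne)
      exact (cross hN hq0 hqlty hp1 hyrot.symm hpq.symm
        (fun hc => hqB (hyrot.trans hc))).elim


section Ins

variable {σ' : Equiv.Perm (Fin n)} {x w : Fin n}

lemma ins (hO : Oriented σ') (hN : NoCross σ') (hxw : x ≠ w) (hfix : σ' x = x)
    (hK : Krew σ' x w) :
    Oriented (swap x (σ' w) * σ') ∧ NoCross (swap x (σ' w) * σ') := by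
  set b := σ' w with hb
  have hbx : b ≠ x := by
    intro e
    apply hxw
    have h2 : σ' x = σ' w := by rw [hfix, ← e, hb]
    exact σ'.injective h2
  have hnsc : ¬ σ'.SameCycle x b := by
    intro hc
    exact hbx (hc.eq_of_left hfix).symm
  have hscwb : σ'.SameCycle w b := hb ▸ sc_apply σ' w
  set σ := swap x b * σ' with hσ
  have hrel : ∀ p q, σ.SameCycle p q ↔
      (σ'.SameCycle p q ∨ (p = x ∧ σ'.SameCycle w q) ∨ (σ'.SameCycle p w ∧ q = x)) := by
    intro p q
    rw [hσ, sc_swap_mul_iff hnsc]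
    unfold Jrel
    constructor
    · rintro (h | ⟨h1, h2⟩ | ⟨h1, h2⟩)
      · exact Or.inl h
      · exact Or.inr (Or.inl ⟨(h1.symm.eq_of_left hfix).symm, hscwb.trans h2⟩)
      · exact Or.inr (Or.inr ⟨h1.trans hscwb.symm, (h2.symm.symm.eq_of_left hfix).symm⟩)
    · rintro (h | ⟨rfl, h2⟩ | ⟨h1, rfl⟩)
      · exact Or.inl h
      · exact Or.inr (Or.inl ⟨Equiv.Perm.SameCycle.refl _ _, hscwb.symm.trans h2⟩)
      · exact Or.inr (Or.inr ⟨h1.trans hscwb, Equiv.Perm.SameCycle.refl _ _⟩)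
  have hvx : σ x = b := by rw [hσ, Perm.mul_apply, hfix, swap_apply_left]
  have hvw : σ w = x := by rw [hσ, Perm.mul_apply, ← hb, swap_apply_right]
  have hvz : ∀ z, z ≠ x → z ≠ w → σ z = σ' z := by
    intro z h1 h2
    rw [hσ, Perm.mul_apply, swap_apply_of_ne_of_ne]
    · intro e; exact h1 (σ'.injective (by rw [e, hfix]))
    · intro e; exact h2 (σ'.injective (by rw [e, ← hb]))
  have hInB : ∀ p q, (σ'.SameCycle p w ∨ p = x) → (σ'.SameCycle q w ∨ q = x) →
      σ.SameCycle p q := by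
    rintro p q (hp | rfl) (hq | rfl)
    · exact (hrel p q).mpr (Or.inl (hp.trans hq.symm))
    · exact (hrel p q).mpr (Or.inr (Or.inr ⟨hp, rfl⟩))
    · exact (hrel p q).mpr (Or.inr (Or.inl ⟨rfl, hq.symm⟩))
    · exact (hrel _ _).mpr (Or.inl (Equiv.Perm.SameCycle.refl _ _))
  -- the two geometric regimes
  rcases lt_or_gt_of_ne hxw with hxltw | hwltx
  · -- x < w : the whole cycle of w lies in (x, w]
    have hBsub : ∀ z, σ'.SameCycle w z → x < z ∧ z ≤ w := by
      intro z hz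
      exact (krew_of_le hxltw.le).mp hK w z hz hxltw le_rfl
    have hwmax : ∀ z, σ'.SameCycle w z → z ≤ w := fun z hz => (hBsub z hz).2
    have hbmin : ∀ z, σ'.SameCycle w z → b ≤ z := by
      intro z hz
      rcases eq_or_ne (σ' w) w with hfw | hfw
      · exact le_of_eq (by rw [hb, hfw]; exact hz.eq_of_left hfw)
      · exact orient2 hO hfw hwmax z hz
    constructor
    · -- Oriented
      intro t ht
      rcases eq_or_ne t x with heq | htx
      · -- t = x, σ x = b, x is min of new block
        rw [heq] at ht ⊢
        constructor
        · intro _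
          have hxb' : x < b := (hBsub b hscwb).1
          refine ⟨by rw [hvx]; exact hxb', ?_⟩
          intro u hu hxu
          rw [hvx]
          rcases (hrel x u).mp hu with h | ⟨_, h2⟩ | ⟨h1, heq2⟩
          · exact absurd (h.eq_of_left hfix) (ne_of_lt hxu)
          · exact hbmin u h2
          · rw [heq2] at hxu
            exact absurd hxu (lt_irrefl x)
        · intro hyp
          have hwsc : σ.SameCycle x w := hInB x w (Or.inr rfl) (Or.inl (Equiv.Perm.SameCycle.refl _ _))
          exact absurd (hyp w hwsc) (not_le.mpr hxltw)
      rcases eq_or_ne t w with heq | htw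
      · -- t = w, σ w = x, w is max of new block
        rw [heq] at ht ⊢
        constructor
        · rintro ⟨u, hu, htu⟩
          exfalso
          rcases (hrel w u).mp hu with h | ⟨he, _⟩ | ⟨_, heq2⟩
          · exact absurd (hwmax u h) (not_le.mpr htu)
          · exact hxw he.symm
          · rw [heq2] at htu
            exact absurd htu (not_lt.mpr hxltw.le)
        · intro _ u hu
          rw [hvw]
          rcases (hrel w u).mp hu with h | ⟨he, _⟩ | ⟨_, heq2⟩
          · exact (hBsub u h).1.le
          · exact absurd he (Ne.symm hxw)
          · rw [heq2]
      -- t ∉ {x, w}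
      have hvt : σ t = σ' t := hvz t htx htw
      by_cases htB : σ'.SameCycle w t
      · -- t in the cycle of w, t < w, not max
        have ht' : σ' t ≠ t := by rwa [hvt] at ht
        have htltw : t < w := lt_of_le_of_ne (hwmax t htB) (fun e => htw e)
        have h1 := orient1 hO ht' htB.symm htltw
        constructor
        · intro _
          refine ⟨by rw [hvt]; exact h1.1, ?_⟩
          intro u hu htu
          rw [hvt]
          rcases (hrel t u).mp hu with h | ⟨he, _⟩ | ⟨_, heq2⟩
          · exact h1.2 u h htu
          · exact absurd he htx
          · rw [heq2] at htu
            exact absurd htu (not_lt.mpr ((hBsub t htB).1.le))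
        · intro hyp
          have : σ.SameCycle t w := hInB t w (Or.inl htB.symm) (Or.inl (Equiv.Perm.SameCycle.refl _ _))
          exact absurd (hyp w this) (not_le.mpr htltw)
      · -- t outside the block: everything transfers
        have ht' : σ' t ≠ t := by rwa [hvt] at ht
        have hsciff : ∀ u, σ.SameCycle t u ↔ σ'.SameCycle t u := by
          intro u
          rw [hrel]
          constructor
          · rintro (h | ⟨heq2, _⟩ | ⟨h1, heq2⟩)
            · exact h
            · exact absurd heq2 htx
            · exact absurd h1.symm htB
          · exact fun h => Or.inl h
        have hOt := hO t ht'
        constructor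
        · rintro ⟨u, hu, htu⟩
          have hc1 := hOt.1 ⟨u, (hsciff u).mp hu, htu⟩
          refine ⟨by rw [hvt]; exact hc1.1, ?_⟩
          intro v hv htv
          rw [hvt]
          exact hc1.2 v ((hsciff v).mp hv) htv
        · intro hyp u hu
          rw [hvt]
          exact hOt.2 (fun v hv => hyp v ((hsciff v).mpr hv)) u ((hsciff u).mp hu)
    · -- NoCross, case x < w
      rintro ⟨p, q, r, s, h1, h2, h3, hpr, hqs, hnpq⟩
      have hnpq' : ¬ σ'.SameCycle p q := fun h => hnpq ((hrel p q).mpr (Or.inl h))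
      have hnIn : ¬ ((σ'.SameCycle p w ∨ p = x) ∧ (σ'.SameCycle q w ∨ q = x)) := by
        rintro ⟨hp, hq⟩; exact hnpq (hInB p q hp hq)
      by_cases hpr' : σ'.SameCycle p r
      · by_cases hqs' : σ'.SameCycle q s
        · exact cross hN h1 h2 h3 hpr' hqs' hnpq'
        · -- q,s in new block, not σ'-related: one is x
          rcases (hrel q s).mp hqs with h | ⟨hqx, hws⟩ | ⟨hqw, hsx⟩
          · exact hqs' h
          · -- q = x, SC' w s; r ∈ class p with x < r < s ≤ w
            rw [hqx] at h1 h2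
            have hsw := hBsub s hws
            have hrint : x < r ∧ r ≤ w := ⟨h2, le_trans h3.le hsw.2⟩
            have hpint := (krew_of_le hxltw.le).mp hK r p hpr'.symm hrint.1 hrint.2
            exact absurd h1 (not_lt.mpr hpint.1.le)
          · -- s = x, SC' q w: but q < s = x while block ⊆ (x,w]
            rw [hsx] at h3
            have hxq := (hBsub q hqw.symm).1
            exact absurd (h2.trans h3) (not_lt.mpr hxq.le)
      · -- p,r in new block
        rcases (hrel p r).mp hpr with h | ⟨hpx, hwr⟩ | ⟨hpw, hrx⟩
        · exact hpr' h
        · -- p = x, SC' w r, r ≤ w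
          rw [hpx] at h1 hnpq' hnIn
          by_cases hqs' : σ'.SameCycle q s
          · -- q ∈ (x,w] since q < r ≤ w; Krew sends s into (x,w]; crossing (q,r,s,w)
            have hrw := hBsub r hwr
            have hqint : x < q ∧ q ≤ w := ⟨h1, le_trans h2.le hrw.2⟩
            have hsint := (krew_of_le hxltw.le).mp hK q s hqs' hqint.1 hqint.2
            have hnq : ¬ σ'.SameCycle q w := by
              intro hc
              exact hnIn ⟨Or.inr rfl, Or.inl hc⟩
            have hsltw : s < w := lt_of_le_of_ne hsint.2 (by
              intro e
              exact hnq (hqs'.trans (e ▸ Equiv.Perm.SameCycle.refl σ' s)))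
            exact cross hN h2 h3 hsltw hqs' hwr.symm (fun hc => hnq (hc.trans hwr.symm))
          · rcases (hrel q s).mp hqs with h | ⟨hqx, hws⟩ | ⟨hqw, hsx⟩
            · exact hqs' h
            · rw [hqx] at h1
              exact absurd h1 (lt_irrefl x)
            · exact hnIn ⟨Or.inr rfl, Or.inl hqw⟩
        · -- r = x, SC' p w: p > x = r > q > p, impossible
          rw [hrx] at h2
          have hxp := (hBsub p hpw.symm).1
          exact absurd (h1.trans h2) (not_lt.mpr hxp.le)
  · -- w < x : the cycle of w avoids (w, x]
    have hPempty : ∀ z, σ'.SameCycle w z → ¬ (w < z ∧ z ≤ x) := by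
      intro z hz ⟨hz1, hz2⟩
      have := (krew_of_le hwltx.le).mp (krew_symm hK) z w hz.symm hz1 hz2
      exact absurd this.1 (lt_irrefl w)
    have hKpair : ∀ p q, σ'.SameCycle p q → w < p → p ≤ x → w < q ∧ q ≤ x :=
      fun p q hpq h1 h2 => (krew_of_le hwltx.le).mp (krew_symm hK) p q hpq h1 h2
    constructor
    · -- Oriented
      intro t ht
      rcases eq_or_ne t x with heq | htx
      · -- t = x, σ x = b
        rw [heq] at ht ⊢
        rcases eq_or_ne (σ' w) w with hfw | hfw
        · -- B' = {w}; new block is {x, w}, x is its max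
          have hbw : b = w := by rw [hb, hfw]
          constructor
          · rintro ⟨u, hu, hxu⟩
            exfalso
            rcases (hrel x u).mp hu with h | ⟨_, h2⟩ | ⟨_, heq2⟩
            · exact ne_of_lt hxu (h.eq_of_left hfix)
            · have := h2.eq_of_left hfw
              rw [← this] at hxu
              exact absurd hxu (not_lt.mpr hwltx.le)
            · rw [heq2] at hxu
              exact absurd hxu (lt_irrefl x)
          · intro _ u hu
            rw [hvx, hbw]
            rcases (hrel x u).mp hu with h | ⟨_, h2⟩ | ⟨_, heq2⟩
            · rw [← h.eq_of_left hfix]; exact hwltx.le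
            · rw [← h2.eq_of_left hfw]
            · rw [heq2]; exact hwltx.le
        · by_cases hwm : ∀ u, σ'.SameCycle w u → u ≤ w
          · -- w is max of B', so b = min B' and x is max of new block
            have hbmin' : ∀ u, σ'.SameCycle w u → b ≤ u := orient2 hO hfw hwm
            constructor
            · rintro ⟨u, hu, hxu⟩
              exfalso
              rcases (hrel x u).mp hu with h | ⟨_, h2⟩ | ⟨_, heq2⟩
              · exact ne_of_lt hxu (h.eq_of_left hfix)
              · exact absurd hxu (not_lt.mpr (le_trans (hwm u h2) hwltx.le))
              · rw [heq2] at hxu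
                exact absurd hxu (lt_irrefl x)
            · intro _ u hu
              rw [hvx]
              rcases (hrel x u).mp hu with h | ⟨_, h2⟩ | ⟨_, heq2⟩
              · rw [← h.eq_of_left hfix]
                exact le_trans (hbmin' w (Equiv.Perm.SameCycle.refl _ _)) hwltx.le
              · exact hbmin' u h2
              · rw [heq2]
                exact le_trans (hbmin' w (Equiv.Perm.SameCycle.refl _ _)) hwltx.le
          · -- w is not max of B': b > w hence b > x
            push_neg at hwm
            obtain ⟨u0, hu0, hwu0⟩ := hwm
            have h1 := orient1 hO hfw hu0 hwu0
            have hbgt : x < b := by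
              have hbw : w < b := by rw [hb]; exact h1.1
              by_contra hc
              push_neg at hc
              exact hPempty b hscwb ⟨hbw, hc⟩
            constructor
            · intro _
              refine ⟨by rw [hvx]; exact hbgt, ?_⟩
              intro u hu hxu
              rw [hvx]
              rcases (hrel x u).mp hu with h | ⟨_, h2⟩ | ⟨_, heq2⟩
              · exact absurd (h.eq_of_left hfix) (ne_of_lt hxu)
              · have : w < u := lt_trans hwltx hxu
                have := h1.2 u h2 this
                rwa [← hb] at this
              · rw [heq2] at hxu
                exact absurd hxu (lt_irrefl x)
            · intro hyp
              have : σ.SameCycle x b := by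
                have := sc_apply σ x
                rwa [hvx] at this
              exact absurd (hyp b this) (not_le.mpr hbgt)
      rcases eq_or_ne t w with heq | htw
      · -- t = w, σ w = x : x is the least element above w in the new block
        rw [heq] at ht ⊢
        constructor
        · intro _
          refine ⟨by rw [hvw]; exact hwltx, ?_⟩
          intro u hu hwu
          rw [hvw]
          rcases (hrel w u).mp hu with h | ⟨he, _⟩ | ⟨_, heq2⟩
          · by_contra hc
            push_neg at hc
            exact hPempty u h ⟨hwu, hc.le⟩
          · exact absurd he (Ne.symm hxw)
          · rw [heq2]
        · intro hyp
          exfalso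
          have : σ.SameCycle w x := hInB w x (Or.inl (Equiv.Perm.SameCycle.refl _ _)) (Or.inr rfl)
          exact absurd (hyp x this) (not_le.mpr hwltx)
      have hvt : σ t = σ' t := hvz t htx htw
      by_cases htB : σ'.SameCycle w t
      · have ht' : σ' t ≠ t := by rwa [hvt] at ht
        by_cases hmaxt : ∀ u, σ'.SameCycle t u → u ≤ t
        · -- t is max of B', hence max of new block
          have hwlt : w < t := lt_of_le_of_ne (hmaxt w htB.symm) (Ne.symm htw)
          have htgtx : x < t := by
            by_contra hc
            push_neg at hc
            exact hPempty t htB ⟨hwlt, hc⟩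
          have h2 := orient2 hO ht' hmaxt
          constructor
          · rintro ⟨u, hu, htu⟩
            exfalso
            rcases (hrel t u).mp hu with h | ⟨he, _⟩ | ⟨_, heq2⟩
            · exact absurd (hmaxt u h) (not_le.mpr htu)
            · exact htx he
            · rw [heq2] at htu
              exact absurd htu (not_lt.mpr htgtx.le)
          · intro _ u hu
            rw [hvt]
            rcases (hrel t u).mp hu with h | ⟨he, _⟩ | ⟨_, heq2⟩
            · exact h2 u h
            · exact absurd he htx
            · rw [heq2]
              exact le_trans (h2 w htB.symm) hwltx.le
        · push_neg at hmaxt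
          obtain ⟨u0, hu0, htu0⟩ := hmaxt
          have h1 := orient1 hO ht' hu0 htu0
          constructor
          · intro _
            refine ⟨by rw [hvt]; exact h1.1, ?_⟩
            intro u hu htu
            rw [hvt]
            rcases (hrel t u).mp hu with h | ⟨he, _⟩ | ⟨_, heq2⟩
            · exact h1.2 u h htu
            · exact absurd he htx
            · -- u = x > t : need σ' t ≤ x; here t ≤ w so σ' t ≤ w < x
              rw [heq2] at htu
              have htlew : t ≤ w := by
                by_contra hc
                push_neg at hc
                exact hPempty t htB ⟨hc, htu.le⟩
              have htltw : t < w := lt_of_le_of_ne htlew htw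
              have : σ' t ≤ w := h1.2 w htB.symm htltw
              rw [heq2]
              exact le_trans this hwltx.le
          · intro hyp
            exfalso
            have : σ.SameCycle t u0 := (hrel t u0).mpr (Or.inl hu0)
            exact absurd (hyp u0 this) (not_le.mpr htu0)
      · -- t outside the block: everything transfers
        have ht' : σ' t ≠ t := by rwa [hvt] at ht
        have hsciff : ∀ u, σ.SameCycle t u ↔ σ'.SameCycle t u := by
          intro u
          rw [hrel]
          constructor
          · rintro (h | ⟨heq2, _⟩ | ⟨h1, heq2⟩)
            · exact h
            · exact absurd heq2 htx
            · exact absurd h1.symm htB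
          · exact fun h => Or.inl h
        have hOt := hO t ht'
        constructor
        · rintro ⟨u, hu, htu⟩
          have hc1 := hOt.1 ⟨u, (hsciff u).mp hu, htu⟩
          refine ⟨by rw [hvt]; exact hc1.1, ?_⟩
          intro v hv htv
          rw [hvt]
          exact hc1.2 v ((hsciff v).mp hv) htv
        · intro hyp u hu
          rw [hvt]
          exact hOt.2 (fun v hv => hyp v ((hsciff v).mpr hv)) u ((hsciff u).mp hu)
    · -- NoCross, case w < x
      rintro ⟨p, q, r, s, h1, h2, h3, hpr, hqs, hnpq⟩
      have hnpq' : ¬ σ'.SameCycle p q := fun h => hnpq ((hrel p q).mpr (Or.inl h))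
      have hnIn : ¬ ((σ'.SameCycle p w ∨ p = x) ∧ (σ'.SameCycle q w ∨ q = x)) := by
        rintro ⟨hp, hq⟩; exact hnpq (hInB p q hp hq)
      by_cases hpr' : σ'.SameCycle p r
      · by_cases hqs' : σ'.SameCycle q s
        · exact cross hN h1 h2 h3 hpr' hqs' hnpq'
        · rcases (hrel q s).mp hqs with h | ⟨hqx, hws⟩ | ⟨hqw, hsx⟩
          · exact hqs' h
          · -- q = x, SC' w s
            rw [hqx] at h1 h2
            have hpnB : ¬ σ'.SameCycle p w := fun hc => hnIn ⟨Or.inl hc, Or.inr hqx⟩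
            rcases lt_trichotomy p w with hpw | hpw | hpw
            · exact cross hN hpw (hwltx.trans h2) h3 hpr' hws hpnB
            · exact hnIn ⟨Or.inl (by rw [hpw]), Or.inr hqx⟩
            · have := hKpair p r hpr' hpw h1.le
              exact absurd this.2 (not_le.mpr h2)
          · -- s = x, SC' q w
            rw [hsx] at h3
            have hqlew : q ≤ w := by
              by_contra hc
              push_neg at hc
              exact hPempty q hqw.symm ⟨hc, (h2.trans h3).le⟩
            rcases lt_trichotomy r w with hrw | hrw | hrw
            · exact cross hN h1 h2 hrw hpr' hqw (fun hc => hnpq' hc)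
            · exact hnIn ⟨Or.inl (by rw [← hrw]; exact hpr'), Or.inl hqw⟩
            · have := hKpair r p hpr'.symm hrw h3.le
              exact absurd (h1.trans_le hqlew) (not_lt.mpr this.1.le)
      · rcases (hrel p r).mp hpr with h | ⟨hpx, hwr⟩ | ⟨hpw, hrx⟩
        · exact hpr' h
        · -- p = x, SC' w r
          by_cases hqs' : σ'.SameCycle q s
          · rw [hpx] at h1 hnIn
            have hnq : ¬ σ'.SameCycle q w := fun hc => hnIn ⟨Or.inr rfl, Or.inl hc⟩
            exact cross hN (hwltx.trans h1) h2 h3 hwr hqs' (fun hc => hnq hc.symm)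
          · rcases (hrel q s).mp hqs with h | ⟨hqx, hws⟩ | ⟨hqw, hsx⟩
            · exact hqs' h
            · rw [hpx] at h1; rw [hqx] at h1
              exact absurd h1 (lt_irrefl x)
            · exact hnIn ⟨Or.inr hpx, Or.inl hqw⟩
        · -- r = x, SC' p w
          rw [hrx] at h2 h3
          by_cases hqs' : σ'.SameCycle q s
          · have hplew : p ≤ w := by
              by_contra hc
              push_neg at hc
              exact hPempty p hpw.symm ⟨hc, (h1.trans h2).le⟩
            rcases lt_trichotomy q w with hqw | hqw | hqw
            · exact cross hN h1 hqw (hwltx.trans h3) hpw hqs' hnpq'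
            · exact hnIn ⟨Or.inl hpw, Or.inl (by rw [hqw])⟩
            · have := hKpair q s hqs' hqw h2.le
              exact absurd this.2 (not_le.mpr h3)
          · rcases (hrel q s).mp hqs with h | ⟨hqx, hws⟩ | ⟨hqw, hsx⟩
            · exact hqs' h
            · rw [hqx] at h2
              exact absurd h2 (lt_irrefl x)
            · rw [hsx] at h3
              exact absurd h3 (lt_irrefl x)
  
end Ins


section MergeStep

lemma merge_step {σ : Equiv.Perm (Fin (n+1))} (hO : Oriented σ) (hN : NoCross σ)
    (hex : ∃ t, ¬ σ.SameCycle 0 t) :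
    ∃ a b : Fin (n+1), ¬ σ.SameCycle a b ∧
      Oriented (swap a b * σ) ∧ NoCross (swap a b * σ) := by
  classical
  set S : Finset (Fin (n+1)) := Finset.univ.filter (fun t => ¬ σ.SameCycle 0 t) with hS
  have hSne : S.Nonempty := by
    obtain ⟨t, ht⟩ := hex
    exact ⟨t, by simp [hS, ht]⟩
  set v := S.min' hSne with hv
  have hv0 : ¬ σ.SameCycle 0 v := by
    have := S.min'_mem hSne
    simp only [hS, Finset.mem_filter, Finset.mem_univ, true_and] at this
    exact this
  have hvmin : ∀ t, ¬ σ.SameCycle 0 t → v ≤ t := fun t ht =>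
    S.min'_le t (by simp [hS, ht])
  have hlt : ∀ t, t < v → σ.SameCycle 0 t := by
    intro t htv
    by_contra hc
    exact absurd htv (not_lt.mpr (hvmin t hc))
  have hvpos : 0 < v.val := by
    rcases Nat.eq_zero_or_pos v.val with h0 | h0
    · exact absurd (show v = 0 from Fin.ext h0) (fun e => hv0 (e ▸ Equiv.Perm.SameCycle.refl σ v))
    · exact h0
  set u : Fin (n+1) := ⟨v.val - 1, by omega⟩ with hu
  have huval : u.val + 1 = v.val := by rw [hu]; simp; omega
  have huv : u < v := by rw [Fin.lt_def]; omega
  have hscu : σ.SameCycle 0 u := hlt u huv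
  have hvminB : ∀ z, σ.SameCycle v z → v ≤ z := fun z hz =>
    hvmin z (fun hc => hv0 (hc.trans hz.symm))
  set T := Finset.univ.filter (fun z => σ.SameCycle v z) with hT
  have hTne : T.Nonempty := ⟨v, by simp [hT]; exact Equiv.Perm.SameCycle.refl _ _⟩
  set M := T.max' hTne with hM
  have hMB : σ.SameCycle v M := by
    have := T.max'_mem hTne
    simp only [hT, Finset.mem_filter, Finset.mem_univ, true_and] at this
    exact this
  have hMmax : ∀ z, σ.SameCycle v z → z ≤ M := fun z hz => T.le_max' z (by simp [hT, hz])
  have hsc0a : σ.SameCycle 0 (σ u) := hscu.trans (sc_apply σ u)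
  have hsc_uv : ¬ σ.SameCycle (σ u) v := fun hc => hv0 (hsc0a.trans hc)
  have hMu : M ≠ u := fun e => hv0 ((hscu.trans (by rw [← e]; exact hMB.symm)).symm).symm
  have huMv : u < M := lt_of_lt_of_le huv (hvminB M hMB)
  have hσM : σ M = v := by
    rcases eq_or_ne (σ M) M with hfM | hfM
    · have hvM : v = M := hMB.eq_of_right hfM
      rw [← hvM] at hfM ⊢
      exact hfM
    · have h2 := orient2 hO hfM (fun z hz => hMmax z (hMB.trans hz))
      exact le_antisymm (h2 v hMB.symm) (hvminB (σ M) (hMB.trans (sc_apply σ M)))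
  refine ⟨σ u, v, hsc_uv, ?_⟩
  set f := swap (σ u) v * σ with hf
  have hrel : ∀ x y, f.SameCycle x y ↔ (σ.SameCycle x y ∨
      (σ.SameCycle 0 x ∧ σ.SameCycle v y) ∨ (σ.SameCycle v x ∧ σ.SameCycle 0 y)) := by
    intro x y
    rw [hf, sc_swap_mul_iff hsc_uv]
    unfold Jrel
    constructor
    · rintro (h | ⟨h1, h2⟩ | ⟨h1, h2⟩)
      · exact Or.inl h
      · exact Or.inr (Or.inl ⟨(h1.trans hsc0a.symm).symm, h2⟩)
      · exact Or.inr (Or.inr ⟨h1.symm, hsc0a.trans h2⟩)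
    · rintro (h | ⟨h1, h2⟩ | ⟨h1, h2⟩)
      · exact Or.inl h
      · exact Or.inr (Or.inl ⟨h1.symm.trans hsc0a, h2⟩)
      · exact Or.inr (Or.inr ⟨h1.symm, hsc0a.symm.trans h2⟩)
  have hInBf : ∀ p q, (σ.SameCycle 0 p ∨ σ.SameCycle v p) → (σ.SameCycle 0 q ∨ σ.SameCycle v q) →
      f.SameCycle p q := by
    rintro p q (hp | hp) (hq | hq)
    · exact (hrel p q).mpr (Or.inl (hp.symm.trans hq))
    · exact (hrel p q).mpr (Or.inr (Or.inl ⟨hp, hq⟩))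
    · exact (hrel p q).mpr (Or.inr (Or.inr ⟨hp, hq⟩))
    · exact (hrel p q).mpr (Or.inl (hp.symm.trans hq))
  have hfu : f u = v := by rw [hf, Perm.mul_apply, swap_apply_left]
  have hfM : f M = σ u := by rw [hf, Perm.mul_apply, hσM, swap_apply_right]
  have hfz : ∀ z, z ≠ u → z ≠ M → f z = σ z := by
    intro z h1 h2
    rw [hf, Perm.mul_apply, swap_apply_of_ne_of_ne]
    · exact fun e => h1 (σ.injective e)
    · exact fun e => h2 (σ.injective (by rw [e, hσM]))
  have hvltz : ∀ z, σ.SameCycle v z → u < z := fun z hz => lt_of_lt_of_le huv (hvminB z hz)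
  have hnuv : ¬ σ.SameCycle u v := fun hc => hv0 (hscu.trans hc)
  constructor
  · -- Oriented f
    intro t ht
    rcases eq_or_ne t u with heq | htu
    · rw [heq] at ht ⊢
      constructor
      · intro _
        refine ⟨by rw [hfu]; exact huv, ?_⟩
        intro y _ huy
        rw [hfu, Fin.le_def]
        rw [Fin.lt_def] at huy
        omega
      · intro hyp
        exfalso
        have : f.SameCycle u v := by
          have := sc_apply f u
          rwa [hfu] at this
        exact absurd (hyp v this) (not_le.mpr huv)
    rcases eq_or_ne t M with heq | htM
    · rw [heq] at ht ⊢
      by_cases hex2 : ∃ z, σ.SameCycle 0 z ∧ u < z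
      · -- u' exists and σ u = u'
        set U : Finset (Fin (n+1)) := Finset.univ.filter (fun z => σ.SameCycle 0 z ∧ u < z) with hU
        have hUne : U.Nonempty := by
          obtain ⟨z, hz⟩ := hex2
          exact ⟨z, by simp [hU, hz.1, hz.2]⟩
        set u' := U.min' hUne with hu'
        have hu'mem : σ.SameCycle 0 u' ∧ u < u' := by
          have := U.min'_mem hUne
          simp only [hU, Finset.mem_filter, Finset.mem_univ, true_and] at this
          exact this
        have hu'min : ∀ z, σ.SameCycle 0 z → u < z → u' ≤ z := fun z h1 h2 =>
          U.min'_le z (by simp [hU, h1, h2])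
        have hvu' : v < u' := by
          have hle : v ≤ u' := by
            rw [Fin.le_def]
            have := hu'mem.2
            rw [Fin.lt_def] at this
            omega
          refine lt_of_le_of_ne hle ?_
          intro e
          rw [← e] at hu'mem
          exact hv0 hu'mem.1
        have hBV : ∀ z, σ.SameCycle v z → z < u' := by
          intro z hz
          by_contra hc
          push_neg at hc
          have hne : z ≠ u' := fun e => hv0 ((hz.trans (e ▸ hu'mem.1.symm)).symm)
          have hzu' : u' < z := lt_of_le_of_ne hc (Ne.symm hne)
          exact cross hN huv hvu' hzu' (hscu.symm.trans hu'mem.1) hz hnuv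
        have hσu : σ u = u' := by
          have hune : σ u ≠ u := by
            intro hc
            have := (hscu.symm.trans hu'mem.1).eq_of_left hc
            exact absurd hu'mem.2 (this ▸ lt_irrefl u)
          have h1 := orient1 hO hune (hscu.symm.trans hu'mem.1) hu'mem.2
          exact le_antisymm (h1.2 u' (hscu.symm.trans hu'mem.1) hu'mem.2)
            (hu'min (σ u) hsc0a h1.1)
        have hMu' : M < u' := hBV M hMB
        constructor
        · intro _
          refine ⟨by rw [hfM, hσu]; exact hMu', ?_⟩
          intro y hy hMy
          rw [hfM, hσu]
          rcases (hrel M y).mp hy with h | ⟨h1, h2⟩ | ⟨h1, h2⟩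
          · exact absurd (hMmax y (hMB.trans h)) (not_le.mpr hMy)
          · exact (hv0 (h1.trans hMB.symm)).elim
          · exact hu'min y h2 (lt_trans huMv hMy)
        · intro hyp
          exfalso
          have : f.SameCycle M u' := hInBf M u' (Or.inr hMB) (Or.inl hu'mem.1)
          exact absurd (hyp u' this) (not_le.mpr hMu')
      · -- all of class 0 is ≤ u; σ u = 0 and M is global max of merged block
        push_neg at hex2
        have hle_u : ∀ z, σ.SameCycle 0 z → z ≤ u := hex2
        have hσu0 : σ u = 0 := by
          rcases eq_or_ne (σ u) u with hfu' | hfu'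
          · have hu0 : u = 0 := hscu.symm.eq_of_left hfu'
            rw [hu0] at hfu' ⊢
            exact hfu'
          · have h2 := orient2 hO hfu' (fun z hz => hle_u z (hscu.trans hz))
            exact Fin.le_zero_iff.mp (h2 0 hscu.symm)
        constructor
        · rintro ⟨y, hy, hMy⟩
          exfalso
          rcases (hrel M y).mp hy with h | ⟨h1, h2⟩ | ⟨h1, h2⟩
          · exact absurd (hMmax y (hMB.trans h)) (not_le.mpr hMy)
          · exact hv0 (h1.trans hMB.symm)
          · exact absurd (le_trans (hle_u y h2) (le_trans huv.le (hvminB M hMB)))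
              (not_le.mpr hMy)
        · intro _ y hy
          rw [hfM, hσu0]
          exact Fin.zero_le y
    -- t ∉ {u, M}
    have hft : f t = σ t := hfz t htu htM
    have ht' : σ t ≠ t := by rwa [hft] at ht
    by_cases ht0 : σ.SameCycle 0 t
    · -- t in the cycle of 0
      have hnvt : ¬ σ.SameCycle v t := fun hc => hv0 (ht0.trans hc.symm)
      by_cases hmaxt : ∀ y, σ.SameCycle t y → y ≤ t
      · -- t is the max of class 0: σ t = 0
        have hut : u < t := lt_of_le_of_ne (hmaxt u (ht0.symm.trans hscu)) (Ne.symm htu)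
        have hσt0 : σ t = 0 := Fin.le_zero_iff.mp (orient2 hO ht' hmaxt 0 ht0.symm)
        constructor
        · rintro ⟨y, hy, hty⟩
          exfalso
          rcases (hrel t y).mp hy with h | ⟨h1, h2⟩ | ⟨h1, h2⟩
          · exact absurd (hmaxt y h) (not_le.mpr hty)
          · -- y in B_v : y < u' ≤ t where u' is min of class0 above u, t qualifies
            set U : Finset (Fin (n+1)) := Finset.univ.filter (fun z => σ.SameCycle 0 z ∧ u < z) with hU
            have hUne : U.Nonempty := ⟨t, by simp [hU, ht0, hut]⟩
            set u' := U.min' hUne with hu'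
            have hu'mem : σ.SameCycle 0 u' ∧ u < u' := by
              have := U.min'_mem hUne
              simp only [hU, Finset.mem_filter, Finset.mem_univ, true_and] at this
              exact this
            have hu't : u' ≤ t := U.min'_le t (by simp [hU, ht0, hut])
            have hvu' : v < u' := by
              have h1 : v ≤ u' := by
                rw [Fin.le_def]
                have := hu'mem.2
                rw [Fin.lt_def] at this
                omega
              refine lt_of_le_of_ne h1 ?_
              intro e
              rw [← e] at hu'mem
              exact hv0 hu'mem.1
            have hBV : ∀ z, σ.SameCycle v z → z < u' := by
              intro z hz
              by_contra hc
              push_neg at hc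
              have hne : z ≠ u' := fun e => hv0 ((hz.trans (by rw [e]; exact hu'mem.1.symm)).symm)
              exact cross hN huv hvu' (lt_of_le_of_ne hc (Ne.symm hne))
                (hscu.symm.trans hu'mem.1) hz hnuv
            exact absurd (lt_of_lt_of_le (hBV y h2) hu't) (not_lt.mpr hty.le)
          · exact hnvt h1
        · intro _ y hy
          rw [hft, hσt0]
          exact Fin.zero_le y
      · push_neg at hmaxt
        obtain ⟨y0, hy0, hty0⟩ := hmaxt
        have h1 := orient1 hO ht' hy0 hty0
        constructor
        · intro _
          refine ⟨by rw [hft]; exact h1.1, ?_⟩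
          intro y hy hty
          rw [hft]
          rcases (hrel t y).mp hy with h | ⟨h2, h3⟩ | ⟨h2, h3⟩
          · exact h1.2 y h hty
          · -- y ∈ B_v, y > t : show σ t ≤ y
            rcases le_or_gt (σ t) y with hd | hd
            · exact hd
            · exfalso
              rcases lt_trichotomy u t with hcase | hcase | hcase
              · -- u < t: minimality of class-0 elements above u gives contradiction
                set U : Finset (Fin (n+1)) := Finset.univ.filter (fun z => σ.SameCycle 0 z ∧ u < z) with hU
                have hUne : U.Nonempty := ⟨t, by simp [hU, ht0, hcase]⟩
                set u' := U.min' hUne with hu'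
                have hu'mem : σ.SameCycle 0 u' ∧ u < u' := by
                  have := U.min'_mem hUne
                  simp only [hU, Finset.mem_filter, Finset.mem_univ, true_and] at this
                  exact this
                have hu't : u' ≤ t := U.min'_le t (by simp [hU, ht0, hcase])
                have hvu' : v < u' := by
                  have hle : v ≤ u' := by
                    rw [Fin.le_def]
                    have := hu'mem.2
                    rw [Fin.lt_def] at this
                    omega
                  refine lt_of_le_of_ne hle ?_
                  intro e
                  rw [← e] at hu'mem
                  exact hv0 hu'mem.1
                have hBV : ∀ z, σ.SameCycle v z → z < u' := by
                  intro z hz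
                  by_contra hc
                  push_neg at hc
                  have hne : z ≠ u' := fun e => hv0 ((hz.trans (by rw [e]; exact hu'mem.1.symm)).symm)
                  exact cross hN huv hvu' (lt_of_le_of_ne hc (Ne.symm hne))
                    (hscu.symm.trans hu'mem.1) hz hnuv
                exact absurd (lt_of_lt_of_le (hBV y h3) hu't) (not_lt.mpr hty.le)
              · exact htu hcase.symm
              · -- t < u : then σ t ≤ u < y
                have := h1.2 u (ht0.symm.trans hscu) hcase
                exact absurd (lt_of_le_of_lt this (hvltz y h3)) (not_lt.mpr hd.le)
          · exact absurd h2 hnvt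
        · intro hyp
          exfalso
          exact absurd (hyp y0 ((hrel t y0).mpr (Or.inl hy0))) (not_le.mpr hty0)
    · by_cases htv : σ.SameCycle v t
      · -- t in cycle of v, t ≠ M so t < M
        have htM' : t < M := lt_of_le_of_ne (hMmax t htv) htM
        have h1 := orient1 hO ht' (htv.symm.trans hMB) htM'
        constructor
        · intro _
          refine ⟨by rw [hft]; exact h1.1, ?_⟩
          intro y hy hty
          rw [hft]
          rcases (hrel t y).mp hy with h | ⟨h2, h3⟩ | ⟨h2, h3⟩
          · exact h1.2 y h hty
          · exact absurd h2 (fun hc => hv0 (hc.trans htv.symm))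
          · -- y ∈ class 0 with y > t > u : u' minimality as before
            set U : Finset (Fin (n+1)) := Finset.univ.filter (fun z => σ.SameCycle 0 z ∧ u < z) with hU
            have hUne : U.Nonempty := ⟨y, by simp [hU, h3, lt_trans (hvltz t htv) hty]⟩
            set u' := U.min' hUne with hu'
            have hu'mem : σ.SameCycle 0 u' ∧ u < u' := by
              have := U.min'_mem hUne
              simp only [hU, Finset.mem_filter, Finset.mem_univ, true_and] at this
              exact this
            have hu'y : u' ≤ y := U.min'_le y (by simp [hU, h3, lt_trans (hvltz t htv) hty])
            have hvu' : v < u' := by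
              have hle : v ≤ u' := by
                rw [Fin.le_def]
                have := hu'mem.2
                rw [Fin.lt_def] at this
                omega
              refine lt_of_le_of_ne hle ?_
              intro e
              rw [← e] at hu'mem
              exact hv0 hu'mem.1
            have hBV : ∀ z, σ.SameCycle v z → z < u' := by
              intro z hz
              by_contra hc
              push_neg at hc
              have hne : z ≠ u' := fun e => hv0 ((hz.trans (by rw [e]; exact hu'mem.1.symm)).symm)
              exact cross hN huv hvu' (lt_of_le_of_ne hc (Ne.symm hne))
                (hscu.symm.trans hu'mem.1) hz hnuv
            have hσtv : σ.SameCycle v (σ t) := htv.trans (sc_apply σ t)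
            exact le_trans (hBV (σ t) hσtv).le hu'y
        · intro hyp
          exfalso
          exact absurd (hyp M (hInBf t M (Or.inr htv) (Or.inr hMB)))
            (not_le.mpr htM')
      · -- t outside both cycles: transfer
        have hscifft : ∀ y, f.SameCycle t y ↔ σ.SameCycle t y := by
          intro y
          rw [hrel]
          constructor
          · rintro (h | ⟨h1, _⟩ | ⟨h1, _⟩)
            · exact h
            · exact absurd h1 ht0
            · exact absurd h1 htv
          · exact fun h => Or.inl h
        have hOt := hO t ht'
        constructor
        · rintro ⟨y, hy, hty⟩
          have hc1 := hOt.1 ⟨y, (hscifft y).mp hy, hty⟩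
          refine ⟨by rw [hft]; exact hc1.1, ?_⟩
          intro z hz htz
          rw [hft]
          exact hc1.2 z ((hscifft z).mp hz) htz
        · intro hyp y hy
          rw [hft]
          exact hOt.2 (fun z hz => hyp z ((hscifft z).mpr hz)) y ((hscifft y).mp hy)
  · -- NoCross f
    rintro ⟨p, q, r, s, h1, h2, h3, hpr, hqs, hnpq⟩
    have hnpq' : ¬ σ.SameCycle p q := fun h => hnpq ((hrel p q).mpr (Or.inl h))
    have hnIn : ¬ ((σ.SameCycle 0 p ∨ σ.SameCycle v p) ∧ (σ.SameCycle 0 q ∨ σ.SameCycle v q)) := by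
      rintro ⟨hp, hq⟩
      exact hnpq (hInBf p q hp hq)
    have hsplit : ∀ x y, f.SameCycle x y → σ.SameCycle x y ∨
        ((σ.SameCycle 0 x ∨ σ.SameCycle v x) ∧ (σ.SameCycle 0 y ∨ σ.SameCycle v y)) := by
      intro x y hxy
      rcases (hrel x y).mp hxy with h | ⟨ha, hb⟩ | ⟨ha, hb⟩
      · exact Or.inl h
      · exact Or.inr ⟨Or.inl ha, Or.inr hb⟩
      · exact Or.inr ⟨Or.inr ha, Or.inl hb⟩
    rcases hsplit p r hpr with hpr' | ⟨hpi, hri⟩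
    · rcases hsplit q s hqs with hqs' | ⟨hqi, hsi⟩
      · exact cross hN h1 h2 h3 hpr' hqs' hnpq'
      · by_cases hqs' : σ.SameCycle q s
        · exact cross hN h1 h2 h3 hpr' hqs' hnpq'
        · have hnp : ¬ (σ.SameCycle 0 p ∨ σ.SameCycle v p) := fun hp => hnIn ⟨hp, hqi⟩
          have hvp : v ≤ p := hvmin p (fun hc => hnp (Or.inl hc))
          have h0p : (0:Fin (n+1)) < p := lt_of_lt_of_le (by rw [Fin.lt_def]; exact hvpos) hvp
          rcases hqi with hq0 | hqv
          · -- q ~ 0; crossing (0, p, q, r)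
            exact cross hN h0p h1 h2 hq0 hpr' (fun hc => hnp (Or.inl hc))
          · -- q ~ v; crossing (v, p, q, r)
            have hvltp : v < p := lt_of_le_of_ne hvp (fun e => hnp (Or.inr (by rw [← e])))
            exact cross hN hvltp h1 h2 hqv hpr' (fun hc => hnp (Or.inr hc))
    · by_cases hpr' : σ.SameCycle p r
      · rcases hsplit q s hqs with hqs' | ⟨hqi, hsi⟩
        · exact cross hN h1 h2 h3 hpr' hqs' hnpq'
        · by_cases hqs'' : σ.SameCycle q s
          · exact cross hN h1 h2 h3 hpr' hqs'' hnpq'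
          · have hnp : ¬ (σ.SameCycle 0 p ∨ σ.SameCycle v p) := fun hp => hnIn ⟨hp, hqi⟩
            have hvp : v ≤ p := hvmin p (fun hc => hnp (Or.inl hc))
            have h0p : (0:Fin (n+1)) < p := lt_of_lt_of_le (by rw [Fin.lt_def]; exact hvpos) hvp
            rcases hqi with hq0 | hqv
            · exact cross hN h0p h1 h2 hq0 hpr' (fun hc => hnp (Or.inl hc))
            · have hvltp : v < p := lt_of_le_of_ne hvp (fun e => hnp (Or.inr (by rw [← e])))
              exact cross hN hvltp h1 h2 hqv hpr' (fun hc => hnp (Or.inr hc))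
      · -- p, r in merged block, not σ-related
        by_cases hqs' : σ.SameCycle q s
        · have hnq : ¬ (σ.SameCycle 0 q ∨ σ.SameCycle v q) := fun hq => hnIn ⟨hpi, hq⟩
          have hvq : v ≤ q := hvmin q (fun hc => hnq (Or.inl hc))
          have h0q : (0:Fin (n+1)) < q := lt_of_lt_of_le (by rw [Fin.lt_def]; exact hvpos) hvq
          have hvltq : v < q := lt_of_le_of_ne hvq (fun e => hnq (Or.inr (by rw [← e])))
          rcases hpi with hp0 | hpv
          · -- p ~ 0 : then r ~ v (else σ-related); crossing (v, q, r, s)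
            rcases hri with hr0 | hrv
            · exact hpr' (hp0.symm.trans hr0)
            · exact cross hN hvltq h2 h3 hrv hqs' (fun hc => hnq (Or.inr hc))
          · rcases hri with hr0 | hrv
            · exact cross hN h0q h2 h3 hr0 hqs' (fun hc => hnq (Or.inl hc))
            · exact hpr' (hpv.symm.trans hrv)
        · rcases hsplit q s hqs with h | ⟨hqi, hsi⟩
          · exact hqs' h
          · exact hnpq (hInBf p q hpi hqi)

end MergeStep


/-! ### assembly -/

lemma cycleCount_pos (σ : Equiv.Perm (Fin (n+1))) : 1 ≤ cycleCount σ := by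
  rw [cycleCount_def']
  exact (Set.ncard_pos (Set.toFinite _)).mpr ⟨0, fun y _ => Fin.zero_le y⟩

lemma sc_krew {σ : Equiv.Perm (Fin (n+1))} (hO : Oriented σ) (hN : NoCross σ) {x y : Fin (n+1)}
    (h : (σ⁻¹ * finRotate (n+1)).SameCycle x y) : Krew σ x y :=
  sc_closure (krew_refl σ) (fun h1 h2 => krew_trans h1 h2) (krew_step hO hN) h

lemma rot_eq {σ : Equiv.Perm (Fin (n+1))} (hO : Oriented σ) (hall : ∀ t, σ.SameCycle 0 t) :
    σ = finRotate (n+1) := by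
  rcases Nat.eq_zero_or_pos n with rfl | hn
  · ext x
    have : x = 0 := Fin.ext (by omega)
    subst this
    have h1 : σ 0 = 0 := Fin.ext (by have := (σ 0).isLt; omega)
    have h2 : finRotate 1 0 = 0 := Fin.ext (by have := (finRotate 1 0).isLt; omega)
    rw [h1, h2]
  · have hmoves : ∀ x : Fin (n+1), σ x ≠ x := by
      intro x hx
      have h1 : x = 0 := ((hall x).symm.eq_of_left hx).symm ▸ ((hall x).symm.eq_of_left hx)
      have h2 : σ 0 = 0 := by rw [← h1]; exact hx
      have hscl : σ.SameCycle 0 ⟨1, by omega⟩ := hall _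
      have := hscl.eq_of_left h2
      have hv : (0 : ℕ) = 1 := congrArg Fin.val this
      omega
    apply Equiv.ext
    intro x
    rcases Nat.lt_or_ge x.val n with hxn | hxn
    · set x1 : Fin (n+1) := ⟨x.val + 1, by omega⟩ with hx1
      have hscx : σ.SameCycle x x1 := (hall x).symm.trans (hall x1)
      have hltx : x < x1 := by rw [Fin.lt_def]; simp [hx1]
      have h1 := orient1 hO (hmoves x) hscx hltx
      have h2 := h1.2 x1 hscx hltx
      have h3 := h1.1
      have hσx : σ x = x1 := by
        apply le_antisymm h2
        rw [Fin.le_def, Fin.lt_def] at *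
        simp [hx1] at *
        omega
      rw [hσx]
      apply Fin.ext
      rw [rot_apply_of_lt hxn]
    · have hmax : ∀ y, σ.SameCycle x y → y ≤ x := by
        intro y _
        rw [Fin.le_def]
        have := y.isLt
        omega
      have h2 := orient2 hO (hmoves x) hmax 0 ((hall x).symm)
      have hσx : σ x = 0 := Fin.le_zero_iff.mp h2
      have hxl : x = Fin.last n := Fin.ext (by simp [Fin.last]; omega)
      rw [hσx, hxl, rot_apply_last]

lemma chain : ∀ (k : ℕ) (σ : Equiv.Perm (Fin (n+1))), cycleCount σ ≤ k → Oriented σ →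
    NoCross σ → ∃ L : List (Equiv.Perm (Fin (n+1))), (∀ s ∈ L, s.IsSwap) ∧
      L.length + 1 = cycleCount σ ∧ finRotate (n+1) = L.prod * σ := by
  intro k
  induction k with
  | zero =>
    intro σ h _ _
    exact absurd (le_trans (cycleCount_pos σ) h) (by omega)
  | succ k ih =>
    intro σ hk hO hN
    by_cases hall : ∀ t, σ.SameCycle 0 t
    · have heq : σ = finRotate (n+1) := rot_eq hO hall
      refine ⟨[], by simp, ?_, by simp [heq]⟩
      rw [heq, cycleCount_finRotate]
      simp
    · push_neg at hall
      obtain ⟨a, b, hab, hO', hN'⟩ := merge_step hO hN hall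
      have habne : a ≠ b := fun e => hab (e ▸ Equiv.Perm.SameCycle.refl σ a)
      have hcount := cycleCount_swap_mul (π := σ) hab
      have hle : cycleCount (swap a b * σ) ≤ k := by
        have := cycleCount_pos (swap a b * σ)
        omega
      obtain ⟨L, hL1, hL2, hL3⟩ := ih (swap a b * σ) hle hO' hN'
      refine ⟨L ++ [swap a b], ?_, ?_, ?_⟩
      · intro s hs
        rcases List.mem_append.mp hs with h | h
        · exact hL1 s h
        · rw [List.mem_singleton.mp h]
          exact ⟨a, b, habne, rfl⟩
      · rw [List.length_append]
        simp only [List.length_singleton]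
        omega
      · rw [List.prod_append, List.prod_singleton, mul_assoc]
        exact hL3

lemma conj_prod (g : Equiv.Perm (Fin n)) : ∀ L : List (Equiv.Perm (Fin n)),
    (L.map (fun s => g⁻¹ * s * g)).prod = g⁻¹ * L.prod * g := by
  intro L
  induction L with
  | nil => simp
  | cons s L ih =>
    rw [List.map_cons, List.prod_cons, List.prod_cons, ih]
    group

lemma cond_implies {σ : Equiv.Perm (Fin (n+1))} (hO : Oriented σ) (hN : NoCross σ) :
    cycleCount σ + cycleCount (σ⁻¹ * finRotate (n+1)) = n + 2 := by
  obtain ⟨L, hL1, hL2, hL3⟩ := chain (cycleCount σ) σ le_rfl hO hN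
  have hconj : σ⁻¹ * finRotate (n+1) = (L.map (fun s => σ⁻¹ * s * σ)).prod * (σ⁻¹ * σ) := by
    rw [conj_prod, hL3]
    group
  have hconj' : σ⁻¹ * finRotate (n+1) = (L.map (fun s => σ⁻¹ * s * σ)).prod := by
    rw [hconj]
    simp
  have hswaps : ∀ s ∈ L.map (fun s => σ⁻¹ * s * σ), Equiv.Perm.IsSwap s := by
    intro s hs
    obtain ⟨t, ht, rfl⟩ := List.mem_map.mp hs
    obtain ⟨a, b, habne, rfl⟩ := hL1 t ht
    refine ⟨σ⁻¹ a, σ⁻¹ b, fun e => habne (σ⁻¹.injective e), ?_⟩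
    rw [swap_apply_apply σ⁻¹ a b]
    simp
  have hbound := prod_swaps_bound (L.map (fun s => σ⁻¹ * s * σ)) hswaps
  rw [← hconj', List.length_map] at hbound
  have hub : cycleCount σ + cycleCount (σ⁻¹ * finRotate (n+1)) ≤ n + 2 := by
    have h1 := subadd σ (σ⁻¹ * finRotate (n+1))
    rw [mul_inv_cancel_left, cycleCount_finRotate] at h1
    omega
  omega

lemma cond_one : Oriented (1 : Equiv.Perm (Fin n)) ∧ NoCross (1 : Equiv.Perm (Fin n)) := by
  constructor
  · intro x hx
    simp at hx
  · rintro ⟨p, q, r, s, h1, h2, h3, hpr, hqs, hnpq⟩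
    rw [Equiv.Perm.sameCycle_one] at hpr
    rw [← hpr] at h2
    exact absurd (h1.trans h2) (lt_irrefl p)

lemma sum_implies : ∀ (k : ℕ) (σ : Equiv.Perm (Fin (n+1))), (n+1) - cycleCount σ ≤ k →
    cycleCount σ + cycleCount (σ⁻¹ * finRotate (n+1)) = n + 2 → Oriented σ ∧ NoCross σ := by
  intro k
  induction k with
  | zero =>
    intro σ hk _
    have h1 : cycleCount σ = n + 1 := le_antisymm (cycleCount_le σ) (by omega)
    rw [eq_one_of_cycleCount h1]
    exact cond_one
  | succ k ih =>
    intro σ hk hsum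
    rcases eq_or_ne σ 1 with rfl | hne
    · exact cond_one
    obtain ⟨x, hx⟩ := exists_ne_of_ne_one hne
    set s := swap x (σ x) with hs
    set σ' := s * σ with hσ'
    have hsplit : cycleCount σ + 1 = cycleCount σ' := cycleCount_swap_mul_sc (Ne.symm hx) (sc_apply σ x)
    have hw : x ≠ σ⁻¹ x := by
      intro e
      apply hx
      conv_lhs => rw [e]
      exact Perm.apply_inv_self' σ x
    have hswapkey : swap x (σ⁻¹ x) = σ⁻¹ * s * σ := by
      have h1 : swap (σ⁻¹ x) (σ⁻¹ (σ x)) = σ⁻¹ * swap x (σ x) * σ := by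
        rw [swap_apply_apply σ⁻¹ x (σ x)]
        simp
      rw [Perm.inv_apply_self' σ x] at h1
      rw [swap_comm, hs, h1]
    have hid : σ⁻¹ * finRotate (n+1) = swap x (σ⁻¹ x) * (σ'⁻¹ * finRotate (n+1)) := by
      rw [hswapkey, hσ', mul_inv_rev, hs, swap_inv]
      simp only [mul_assoc, mul_inv_cancel_left, swap_mul_self_mul]
    have hub' : cycleCount σ' + cycleCount (σ'⁻¹ * finRotate (n+1)) ≤ n + 2 := by
      have h1 := subadd σ' (σ'⁻¹ * finRotate (n+1))
      rw [mul_inv_cancel_left, cycleCount_finRotate] at h1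
      omega
    by_cases hsc : (σ'⁻¹ * finRotate (n+1)).SameCycle x (σ⁻¹ x)
    · have hψ := cycleCount_swap_mul_sc hw hsc
      rw [← hid] at hψ
      have hsum' : cycleCount σ' + cycleCount (σ'⁻¹ * finRotate (n+1)) = n + 2 := by omega
      have hltn : cycleCount σ < n + 1 := cycleCount_lt_of_ne_one hne
      have hmeas : (n+1) - cycleCount σ' ≤ k := by omega
      obtain ⟨hO', hN'⟩ := ih σ' hmeas hsum'
      have hK : Krew σ' x (σ⁻¹ x) := sc_krew hO' hN' hsc
      have hfix' : σ' x = x := by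
        rw [hσ', Perm.mul_apply, hs, swap_apply_right]
      have hins := ins hO' hN' hw hfix' hK
      have hval : σ' (σ⁻¹ x) = σ x := by
        rw [hσ', Perm.mul_apply, Perm.apply_inv_self' σ, hs, swap_apply_left]
      have hback : swap x (σ' (σ⁻¹ x)) * σ' = σ := by
        rw [hval, hσ', ← hs, ← mul_assoc, swap_mul_self, one_mul]
      rwa [hback] at hins
    · exfalso
      have hψ := cycleCount_swap_mul (π := σ'⁻¹ * finRotate (n+1)) hsc
      rw [← hid] at hψ
      omega

end NC

open NC in

/-- σ ≼ (1 … n) iff every cycle of σ carries the cyclic order induced by (1 … n) and the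
cycles of σ form a non-crossing partition. -/
theorem stmt2 (n : ℕ) (σ : Equiv.Perm (Fin n)) :
    precLe σ (finRotate n) ↔
      (∀ x : Fin n, σ x ≠ x →
          ((∃ y, σ.SameCycle x y ∧ x < y) →
            x < σ x ∧ ∀ y, σ.SameCycle x y → x < y → σ x ≤ y) ∧
          ((∀ y, σ.SameCycle x y → y ≤ x) → ∀ y, σ.SameCycle x y → σ x ≤ y)) ∧
        ¬ ∃ p q r s : Fin n, p < q ∧ q < r ∧ r < s ∧
            σ.SameCycle p r ∧ σ.SameCycle q s ∧ ¬ σ.SameCycle p q := by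
  rcases n with _ | m
  · constructor
    · intro _
      constructor
      · intro x
        exact x.elim0
      · rintro ⟨p, -⟩
        exact p.elim0
    · intro _
      have h1 : ∀ τ : Equiv.Perm (Fin 0), cycleCount τ = 0 :=
        fun τ => le_antisymm (NC.cycleCount_le τ) (Nat.zero_le _)
      simp [precLe, normPerm, h1]
  · have key1 : precLe σ (finRotate (m+1)) ↔
        cycleCount σ + cycleCount (σ⁻¹ * finRotate (m+1)) = m + 2 := by
      unfold precLe normPerm
      rw [NC.cycleCount_finRotate]
      have hb1 := NC.cycleCount_le σ
      have hb2 := NC.cycleCount_le (σ⁻¹ * finRotate (m+1))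
      have hb3 := NC.cycleCount_pos σ
      have hb4 := NC.cycleCount_pos (σ⁻¹ * finRotate (m+1))
      have hub : cycleCount σ + cycleCount (σ⁻¹ * finRotate (m+1)) ≤ m + 2 := by
        have h1 := NC.subadd σ (σ⁻¹ * finRotate (m+1))
        rw [mul_inv_cancel_left, NC.cycleCount_finRotate] at h1
        omega
      omega
    constructor
    · intro h
      exact NC.sum_implies ((m+1) - cycleCount σ) σ le_rfl (key1.mp h)
    · rintro ⟨hO, hN⟩
      exact key1.mpr (NC.cond_implies hO hN)
end

section
/- Let γ = ((i₁ j₁),…,(i_k j_k)) ∈ Σ_n(k) and let l ∈ {1,…,k}. Then every element of C_{γ_{l−1}}(j_l) is strictly greater than i_l, and i_l is the largest element of C_{γ_{l−1}}(i_l) with this property: every x ∈ C_{γ_{l−1}}(i_l) satisfying x < y for all y ∈ C_{γ_{l−1}}(j_l) satisfies x ≤ i_l. -/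
open Equiv Equiv.Perm

/-- cyclic distance from `a` to `b` in `Fin n`. -/
def dd {n : ℕ} (a b : Fin n) : ℕ := if a.val ≤ b.val then b.val - a.val else n + b.val - a.val

section dd
variable {n : ℕ} (a b c : Fin n)

lemma dd_lt : dd a b < n := by
  have := a.isLt; have := b.isLt; unfold dd; split <;> omega

lemma dd_eq_zero_iff : dd a b = 0 ↔ a = b := by
  have := a.isLt; have := b.isLt; unfold dd; rw [Fin.ext_iff]; split <;> omega

lemma dd_inj {a b c : Fin n} (h : dd a b = dd a c) : b = c := by
  have := a.isLt; have := b.isLt; have := c.isLt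
  unfold dd at h; rw [Fin.ext_iff]
  split at h <;> split at h <;> omega

lemma dd_rev {a b : Fin n} (h : a ≠ b) : dd b a = n - dd a b := by
  have := a.isLt; have := b.isLt
  have h' : a.val ≠ b.val := fun hh => h (Fin.ext hh)
  unfold dd; split <;> split <;> omega

lemma dd_add_lt {a b c : Fin n} (h : dd a b + dd b c < n) : dd a c = dd a b + dd b c := by
  have := a.isLt; have := b.isLt; have := c.isLt
  unfold dd at *; split at h <;> split at h <;> split <;> omega

end dd

section powhelp
variable {n : ℕ} (σ : Equiv.Perm (Fin n))

lemma pow_apply_succ (m : ℕ) (x : Fin n) : (σ ^ (m+1)) x = σ ((σ ^ m) x) := by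
  rw [pow_succ' σ m]; rfl

lemma sc_pow_self (m : ℕ) (x : Fin n) : σ.SameCycle x ((σ ^ m) x) :=
  ⟨(m : ℤ), by rw [zpow_natCast]⟩

lemma fixed_sc {σ : Equiv.Perm (Fin n)} {x y : Fin n} (hx : σ x = x)
    (h : σ.SameCycle x y) : y = x := by
  obtain ⟨m, -, -, hm⟩ := h.exists_pow_eq''
  have : ∀ s : ℕ, (σ ^ s) x = x := by
    intro s; induction s with
    | zero => rfl
    | succ s ih => rw [pow_apply_succ, ih, hx]
  rw [← hm, this]

end powhelp
open Equiv Equiv.Perm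

section merge
variable {n : ℕ}

-- π := σ * swap u v basic applications
lemma pi_app_u (σ : Equiv.Perm (Fin n)) (u v : Fin n) :
    (σ * Equiv.swap u v) u = σ v := by simp [Equiv.Perm.mul_apply]

lemma pi_app_v (σ : Equiv.Perm (Fin n)) (u v : Fin n) :
    (σ * Equiv.swap u v) v = σ u := by simp [Equiv.Perm.mul_apply]

lemma pi_app_other (σ : Equiv.Perm (Fin n)) {u v x : Fin n} (hu : x ≠ u) (hv : x ≠ v) :
    (σ * Equiv.swap u v) x = σ x := by
  simp [Equiv.Perm.mul_apply, Equiv.swap_apply_of_ne_of_ne hu hv]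

/-- m1: if `u,v` lie in different `σ`-cycles, everything in the `σ`-cycle of `v`
is in the `(σ * swap u v)`-cycle of `u`. -/
lemma merge_m1 {σ : Equiv.Perm (Fin n)} {u v : Fin n}
    (hsc : ¬σ.SameCycle u v) :
    ∀ y, σ.SameCycle v y → (σ * Equiv.swap u v).SameCycle u y := by
  set π := σ * Equiv.swap u v with hπ
  have base : π.SameCycle u (σ v) := by
    rw [show σ v = π u from (pi_app_u σ u v).symm]
    exact (Equiv.Perm.sameCycle_apply_right).mpr (Equiv.Perm.SameCycle.refl _ _)
  have key : ∀ m, 1 ≤ m → π.SameCycle u ((σ ^ m) v) := by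
    intro m
    induction m with
    | zero => intro h; exact absurd h (by omega)
    | succ m ih =>
      intro _
      by_cases hm0 : m = 0
      · subst hm0; rw [pow_one]; exact base
      · have ihm := ih (by omega)
        by_cases hv : (σ ^ m) v = v
        · rw [pow_apply_succ, hv]; exact base
        · have hu : (σ ^ m) v ≠ u := by
            intro h
            exact hsc ((h ▸ sc_pow_self σ m v) : σ.SameCycle v u).symm
          have hst : π ((σ ^ m) v) = (σ ^ (m+1)) v := by
            rw [hπ, pi_app_other σ hu hv, pow_apply_succ]
          rw [← hst]
          exact (Equiv.Perm.sameCycle_apply_right).mpr ihm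
  intro y hy
  obtain ⟨m, hm1, -, hmy⟩ := hy.exists_pow_eq''
  exact hmy ▸ key m hm1

/-- m2 -/
lemma merge_m2 {σ : Equiv.Perm (Fin n)} {u v : Fin n}
    (hsc : ¬σ.SameCycle u v) :
    ∀ y, σ.SameCycle u y → (σ * Equiv.swap u v).SameCycle v y := by
  have := merge_m1 (σ := σ) (u := v) (v := u) (fun h => hsc h.symm)
  rwa [Equiv.swap_comm v u] at this

lemma merge_m3 {σ : Equiv.Perm (Fin n)} {u v : Fin n}
    (hsc : ¬σ.SameCycle u v) : (σ * Equiv.swap u v).SameCycle u v :=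
  merge_m1 hsc v (Equiv.Perm.SameCycle.refl _ _)

/-- T1: outside the two cycles, powers agree. -/
lemma merge_T1 {σ : Equiv.Perm (Fin n)} {u v x : Fin n}
    (hxu : ¬σ.SameCycle x u) (hxv : ¬σ.SameCycle x v) :
    ∀ m : ℕ, ((σ * Equiv.swap u v) ^ m) x = (σ ^ m) x := by
  intro m
  induction m with
  | zero => rfl
  | succ m ih =>
    rw [pow_apply_succ, ih, pow_apply_succ]
    have hu : (σ ^ m) x ≠ u := fun h => hxu (h ▸ sc_pow_self σ m x)
    have hv : (σ ^ m) x ≠ v := fun h => hxv (h ▸ sc_pow_self σ m x)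
    rw [pi_app_other σ hu hv]

/-- m7 -/
lemma merge_m7 {σ : Equiv.Perm (Fin n)} {u v : Fin n}
    (hsc : ¬σ.SameCycle u v) :
    ∀ x y, σ.SameCycle x y → (σ * Equiv.swap u v).SameCycle x y := by
  intro x y hxy
  by_cases hux : σ.SameCycle u x
  · exact ((merge_m2 hsc x hux).symm.trans (merge_m2 hsc y (hux.trans hxy))).symm.symm
  · by_cases hvx : σ.SameCycle v x
    · exact ((merge_m1 hsc x hvx).symm.trans (merge_m1 hsc y (hvx.trans hxy)))
    · obtain ⟨m, -, -, hm⟩ := hxy.exists_pow_eq''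
      have := merge_T1 (fun h => hux h.symm) (fun h => hvx h.symm) m
      exact ⟨(m : ℤ), by rw [zpow_natCast, this, hm]⟩

/-- m4: confinement. -/
lemma merge_m4 {σ : Equiv.Perm (Fin n)} {u v : Fin n} :
    ∀ y, (σ * Equiv.swap u v).SameCycle u y → σ.SameCycle u y ∨ σ.SameCycle v y := by
  set π := σ * Equiv.swap u v with hπ
  have key : ∀ m : ℕ, σ.SameCycle u ((π ^ m) u) ∨ σ.SameCycle v ((π ^ m) u) := by
    intro m
    induction m with
    | zero => exact Or.inl (Equiv.Perm.SameCycle.refl _ _)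
    | succ m ih =>
      rw [pow_apply_succ]
      set z := (π ^ m) u with hz
      by_cases hu : z = u
      · rw [hu, hπ, pi_app_u]
        exact Or.inr ((Equiv.Perm.sameCycle_apply_right).mpr (Equiv.Perm.SameCycle.refl _ _))
      · by_cases hv : z = v
        · rw [hv, hπ, pi_app_v]
          exact Or.inl ((Equiv.Perm.sameCycle_apply_right).mpr (Equiv.Perm.SameCycle.refl _ _))
        · rw [hπ, pi_app_other σ hu hv]
          rcases ih with h | h
          · exact Or.inl ((Equiv.Perm.sameCycle_apply_right).mpr h)
          · exact Or.inr ((Equiv.Perm.sameCycle_apply_right).mpr h)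
  intro y hy
  obtain ⟨m, -, -, hm⟩ := hy.exists_pow_eq''
  exact hm ▸ key m
end merge
section split
variable {n : ℕ}

lemma split_s1 {σ : Equiv.Perm (Fin n)} {u v : Fin n} (huv : u ≠ v)
    (hsc : σ.SameCycle u v) : ¬(σ * Equiv.swap u v).SameCycle u v := by
  classical
  set π := σ * Equiv.swap u v with hπ
  obtain ⟨m0, hm01, -, hm0⟩ := hsc.symm.exists_pow_eq''
  have hP : ∃ r, (1 ≤ r ∧ (σ ^ r) v = u) := ⟨m0, hm01, hm0⟩
  set r := Nat.find hP with hr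
  obtain ⟨hr1, hru⟩ := Nat.find_spec hP
  have hmin : ∀ s, s < r → ¬(1 ≤ s ∧ (σ ^ s) v = u) := fun s hs => Nat.find_min hP hs
  have hnv : ∀ s, 1 ≤ s → s < r → (σ ^ s) v ≠ v := by
    intro s hs1 hsr hv
    have h2 : (σ ^ (r - s)) v = u := by
      have h3 : (σ ^ (r - s)) ((σ ^ s) v) = u := by
        rw [← Equiv.Perm.mul_apply, ← pow_add]
        rwa [Nat.sub_add_cancel (le_of_lt hsr)]
      rwa [hv] at h3
    exact hmin (r - s) (by omega) ⟨by omega, h2⟩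
  have walk : ∀ s, 1 ≤ s → s ≤ r → (π ^ s) u = (σ ^ s) v := by
    intro s
    induction s with
    | zero => intro h; exact absurd h (by omega)
    | succ s ih =>
      intro _ hsr
      by_cases hs0 : s = 0
      · subst hs0; rw [pow_one, pow_one, hπ, pi_app_u]
      · have ihs := ih (by omega) (by omega)
        rw [pow_apply_succ, ihs, pow_apply_succ]
        have h1 : (σ ^ s) v ≠ u := fun h => (hmin s (by omega)) ⟨by omega, h⟩
        have h2 : (σ ^ s) v ≠ v := hnv s (by omega) (by omega)
        rw [hπ, pi_app_other σ h1 h2]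
  have hret : (π ^ r) u = u := by rw [walk r hr1 le_rfl, hru]
  intro hcon
  obtain ⟨m, -, -, hm⟩ := hcon.exists_pow_eq''
  have hper : ∀ q, (π ^ (q * r)) u = u := by
    intro q; induction q with
    | zero => rw [Nat.zero_mul, pow_zero]; rfl
    | succ q ih => rw [Nat.succ_mul, pow_add, Equiv.Perm.mul_apply, hret, ih]
  have hs : (π ^ (m % r)) u = v := by
    have hmr : m % r + m / r * r = m := Nat.mod_add_div' m r
    calc (π ^ (m % r)) u = (π ^ (m % r)) ((π ^ (m / r * r)) u) := by rw [hper]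
    _ = (π ^ (m % r + m / r * r)) u := by rw [pow_add, Equiv.Perm.mul_apply]
    _ = v := by rw [hmr, hm]
  have hsr : m % r < r := Nat.mod_lt _ (by omega)
  by_cases h0 : m % r = 0
  · rw [h0, pow_zero] at hs; exact huv (by simpa using hs)
  · rw [walk (m % r) (by omega) (le_of_lt hsr)] at hs
    exact hnv (m % r) (by omega) hsr hs

end split



section count
variable {n : ℕ}

lemma exists_orbit_min (σ : Equiv.Perm (Fin n)) (x : Fin n) :
    ∃ m, σ.SameCycle x m ∧ ∀ y, σ.SameCycle x y → m ≤ y := by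
  classical
  obtain ⟨m, hm, hmin⟩ := Finset.exists_min_image
    (Finset.univ.filter (fun y => σ.SameCycle x y)) id
    ⟨x, Finset.mem_filter.mpr ⟨Finset.mem_univ x, Equiv.Perm.SameCycle.refl σ x⟩⟩
  exact ⟨m, (Finset.mem_filter.mp hm).2,
    fun y hy => hmin y (Finset.mem_filter.mpr ⟨Finset.mem_univ _, hy⟩)⟩

lemma cycleCount_merge {σ : Equiv.Perm (Fin n)} {u v : Fin n}
    (hsc : ¬σ.SameCycle u v) :
    cycleCount (σ * Equiv.swap u v) + 1 = cycleCount σ := by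
  classical
  set π := σ * Equiv.swap u v with hπ
  obtain ⟨a, hau, hamin⟩ := exists_orbit_min σ u
  obtain ⟨b, hbv, hbmin⟩ := exists_orbit_min σ v
  obtain ⟨e, heu, hemin⟩ := exists_orbit_min π u
  set A : Set (Fin n) :=
    {x | (∀ y, σ.SameCycle x y → x ≤ y) ∧ ¬σ.SameCycle u x ∧ ¬σ.SameCycle v x} with hA
  have hF : ∀ x, ¬σ.SameCycle u x → ¬σ.SameCycle v x →
      (∀ y, σ.SameCycle x y ↔ π.SameCycle x y) := by
    intro x hux hvx y
    have hxu : ¬σ.SameCycle x u := fun h => hux h.symm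
    have hxv : ¬σ.SameCycle x v := fun h => hvx h.symm
    constructor
    · intro h
      obtain ⟨m, -, -, hm⟩ := h.exists_pow_eq''
      exact ⟨(m : ℤ), by rw [zpow_natCast, ← hπ] at *; rw [merge_T1 hxu hxv m, hm]⟩
    · intro h
      obtain ⟨m, -, -, hm⟩ := h.exists_pow_eq''
      rw [hπ, merge_T1 hxu hxv m] at hm
      exact ⟨(m : ℤ), by rw [zpow_natCast, hm]⟩
  have hMσ : {x : Fin n | ∀ y, σ.SameCycle x y → x ≤ y} = A ∪ {a, b} := by
    ext x
    simp only [hA, Set.mem_setOf_eq, Set.mem_union, Set.mem_insert_iff,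
      Set.mem_singleton_iff]
    constructor
    · intro hx
      by_cases hux : σ.SameCycle u x
      · exact Or.inr (Or.inl (le_antisymm (hx a (hux.symm.trans hau)) (hamin x hux)))
      · by_cases hvx : σ.SameCycle v x
        · exact Or.inr (Or.inr (le_antisymm (hx b (hvx.symm.trans hbv)) (hbmin x hvx)))
        · exact Or.inl ⟨hx, hux, hvx⟩
    · rintro (⟨h1, -, -⟩ | rfl | rfl)
      · exact h1
      · exact fun y hy => hamin y (hau.trans hy)
      · exact fun y hy => hbmin y (hbv.trans hy)
  have hMπ : {x : Fin n | ∀ y, π.SameCycle x y → x ≤ y} = A ∪ {e} := by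
    ext x
    simp only [hA, Set.mem_setOf_eq, Set.mem_union, Set.mem_singleton_iff]
    constructor
    · intro hx
      by_cases hux : π.SameCycle u x
      · exact Or.inr (le_antisymm (hx e (hux.symm.trans heu)) (hemin x hux))
      · have hux' : ¬σ.SameCycle u x := fun h => hux (hπ ▸ (merge_m3 hsc).trans (merge_m2 hsc x h))
        have hvx' : ¬σ.SameCycle v x := fun h => hux (hπ ▸ merge_m1 hsc x h)
        exact Or.inl ⟨fun y hy => hx y ((hF x hux' hvx' y).mp hy), hux', hvx'⟩
    · rintro (⟨h1, hux, hvx⟩ | rfl)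
      · exact fun y hy => h1 y ((hF x hux hvx y).mpr hy)
      · exact fun y hy => hemin y (heu.trans hy)
  have haA : a ∉ A := fun h => h.2.1 hau
  have hbA : b ∉ A := fun h => h.2.2 hbv
  have heA : e ∉ A := by
    intro h
    rcases merge_m4 e (hπ ▸ heu) with h1 | h1
    · exact h.2.1 h1
    · exact h.2.2 h1
  have hab : a ≠ b := by rintro rfl; exact hsc (hau.trans hbv.symm)
  have hd1 : Disjoint A ({a, b} : Set (Fin n)) := by
    rw [Set.disjoint_right]
    rintro x (rfl | rfl) <;> assumption
  have hd2 : Disjoint A ({e} : Set (Fin n)) := by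
    rw [Set.disjoint_right]
    rintro x rfl; exact heA
  rw [cycleCount, cycleCount, hMσ, hMπ,
    Set.ncard_union_eq hd2 (Set.toFinite _) (Set.toFinite _),
    Set.ncard_union_eq hd1 (Set.toFinite _) (Set.toFinite _),
    Set.ncard_singleton, Set.ncard_pair hab]

lemma cycleCount_le (σ : Equiv.Perm (Fin n)) : cycleCount σ ≤ n := by
  rw [cycleCount]
  have h := Set.ncard_le_ncard (Set.subset_univ
    {x : Fin n | ∀ y, σ.SameCycle x y → x ≤ y}) Set.finite_univ
  simpa [Set.ncard_univ, Nat.card_eq_fintype_card] using h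

lemma cycleCount_pos (σ : Equiv.Perm (Fin n)) (hn : 0 < n) : 0 < cycleCount σ := by
  obtain ⟨m, hm, hmin⟩ := exists_orbit_min σ ⟨0, hn⟩
  rw [cycleCount, Set.ncard_pos (Set.toFinite _)]
  exact ⟨m, fun y hy => hmin y (hm.trans hy)⟩

lemma cycleCount_one : cycleCount (1 : Equiv.Perm (Fin n)) = n := by
  have h : {x : Fin n | ∀ y, (1 : Equiv.Perm (Fin n)).SameCycle x y → x ≤ y} = Set.univ := by
    ext x
    simp only [Set.mem_setOf_eq, Set.mem_univ, iff_true]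
    intro y hy
    rw [Equiv.Perm.sameCycle_one] at hy
    exact le_of_eq hy
  rw [cycleCount, h, Set.ncard_univ, Nat.card_eq_fintype_card, Fintype.card_fin]

lemma eq_one_of_cycleCount (σ : Equiv.Perm (Fin n)) (h : n ≤ cycleCount σ) : σ = 1 := by
  have huniv : {x : Fin n | ∀ y, σ.SameCycle x y → x ≤ y} = Set.univ := by
    apply Set.eq_of_subset_of_ncard_le (Set.subset_univ _) _ Set.finite_univ
    rw [Set.ncard_univ, Nat.card_eq_fintype_card, Fintype.card_fin]
    exact h
  have hle : ∀ x : Fin n, x ≤ σ x := by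
    intro x
    have hx : x ∈ {x : Fin n | ∀ y, σ.SameCycle x y → x ≤ y} := huniv ▸ Set.mem_univ x
    exact hx (σ x) ⟨1, by simp⟩
  have hsum : ∑ x : Fin n, (σ x).val = ∑ x : Fin n, x.val :=
    Equiv.sum_comp σ (fun x => x.val)
  have hpt := (Finset.sum_eq_sum_iff_of_le
    (fun i _ => (Fin.le_iff_val_le_val.mp (hle i)))).mp hsum.symm
  ext x
  exact ((hpt x (Finset.mem_univ x)).symm : (σ x).val = x.val)

lemma normPerm_merge {σ : Equiv.Perm (Fin n)} {u v : Fin n}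
    (hsc : ¬σ.SameCycle u v) :
    normPerm (σ * Equiv.swap u v) = normPerm σ + 1 := by
  have h1 := cycleCount_merge hsc
  have h2 := cycleCount_le σ
  have h3 : u ≠ v := fun h => hsc (h ▸ Equiv.Perm.SameCycle.refl _ _)
  have h4 : 0 < n := Nat.pos_of_ne_zero (fun h => (h ▸ u).elim0)
  have h5 := cycleCount_pos σ h4
  rw [normPerm, normPerm]; omega

lemma normPerm_split {σ : Equiv.Perm (Fin n)} {u v : Fin n} (huv : u ≠ v)
    (hsc : σ.SameCycle u v) :
    normPerm σ = normPerm (σ * Equiv.swap u v) + 1 := by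
  have h0 : σ * Equiv.swap u v * Equiv.swap u v = σ := by
    rw [mul_assoc, Equiv.swap_mul_self, mul_one]
  have h1 := cycleCount_merge (σ := σ * Equiv.swap u v) (split_s1 huv hsc)
  rw [h0] at h1
  have h2 := cycleCount_le (σ * Equiv.swap u v)
  have h4 : 0 < n := Nat.pos_of_ne_zero (fun h => (h ▸ u).elim0)
  have h5 := cycleCount_pos (σ * Equiv.swap u v) h4
  rw [normPerm, normPerm]; omega

lemma normPerm_one : normPerm (1 : Equiv.Perm (Fin n)) = 0 := by
  rw [normPerm, cycleCount_one]; omega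

lemma normPerm_swap_step {u v : Fin n} (huv : u ≠ v) (σ : Equiv.Perm (Fin n)) :
    normPerm (σ * Equiv.swap u v) ≤ normPerm σ + 1 ∧
    normPerm σ ≤ normPerm (σ * Equiv.swap u v) + 1 := by
  by_cases hsc : σ.SameCycle u v
  · rw [normPerm_split huv hsc]; omega
  · rw [normPerm_merge hsc]; omega

end count
section lists
variable {n : ℕ}

lemma np_mul_list (L : List (Equiv.Perm (Fin n))) (hL : ∀ τ ∈ L, τ.IsSwap) :
    ∀ ρ : Equiv.Perm (Fin n), normPerm (ρ * L.prod) ≤ normPerm ρ + L.length ∧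
      normPerm ρ ≤ normPerm (ρ * L.prod) + L.length := by
  induction L with
  | nil => intro ρ; simp
  | cons τ L ih =>
    intro ρ
    obtain ⟨u, v, huv, rfl⟩ := hL τ (List.mem_cons_self)
    have h2 := ih (fun τ' ht => hL τ' (List.mem_cons_of_mem _ ht)) (ρ * Equiv.swap u v)
    have h1 := normPerm_swap_step huv ρ
    rw [List.prod_cons, ← mul_assoc]
    rw [List.length_cons]
    omega

lemma desum : ∀ m : ℕ, ∀ ρ : Equiv.Perm (Fin n), normPerm ρ = m →
    ∃ L : List (Equiv.Perm (Fin n)), (∀ τ ∈ L, τ.IsSwap) ∧ L.length = m ∧ L.prod = ρ := by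
  intro m
  induction m with
  | zero =>
    intro ρ h
    have hcc : n ≤ cycleCount ρ := by
      have := cycleCount_le ρ; rw [normPerm] at h; omega
    refine ⟨[], by simp, rfl, ?_⟩
    rw [List.prod_nil, eq_one_of_cycleCount ρ hcc]
  | succ m ih =>
    intro ρ h
    have hne : ∃ x, ρ x ≠ x := by
      by_contra hc
      push_neg at hc
      have : ρ = 1 := Equiv.ext fun x => hc x
      rw [this, normPerm_one] at h
      omega
    obtain ⟨x, hx⟩ := hne
    have huv : x ≠ ρ x := fun h' => hx h'.symm
    have hsc : ρ.SameCycle x (ρ x) := ⟨1, by simp⟩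
    have hstep := normPerm_split huv hsc
    have hnp : normPerm (ρ * Equiv.swap x (ρ x)) = m := by omega
    obtain ⟨L, hL1, hL2, hL3⟩ := ih _ hnp
    refine ⟨L ++ [Equiv.swap x (ρ x)], ?_, ?_, ?_⟩
    · intro τ hτ
      rcases List.mem_append.mp hτ with h' | h'
      · exact hL1 τ h'
      · rw [List.mem_singleton.mp h']; exact ⟨x, ρ x, huv, rfl⟩
    · simp [hL2]
    · rw [List.prod_append, hL3, List.prod_singleton, mul_assoc,
        Equiv.swap_mul_self, mul_one]

/-- general triangle -/
lemma np_triangle (ρ ψ : Equiv.Perm (Fin n)) :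
    normPerm (ρ * ψ) ≤ normPerm ρ + normPerm ψ := by
  obtain ⟨L, hL1, hL2, hL3⟩ := desum (normPerm ψ) ψ rfl
  have := (np_mul_list L hL1 ρ).1
  rw [hL3, hL2] at this
  exact this

end lists
section orient
variable {n : ℕ}

def Orient (π : Equiv.Perm (Fin n)) : Prop :=
  ∀ x y, π.SameCycle x y → y ≠ x → dd x (π x) ≤ dd x y

lemma orient_finRotate (hn : 2 ≤ n) : Orient (finRotate n) := by
  intro x y hsc hne
  have h1 : dd x y ≠ 0 := fun h => hne ((dd_eq_zero_iff x y).mp h).symm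
  obtain ⟨m, rfl⟩ : ∃ m, n = m + 2 := ⟨n - 2, by omega⟩
  have hx := x.isLt
  have hrot : (finRotate (m + 2)) x = x + 1 := finRotate_succ_apply x
  have hval : ((x + 1 : Fin (m + 2))).val = (x.val + 1) % (m + 2) := by
    rw [Fin.val_add]
    simp
  have hcase : (x.val + 1) % (m + 2) = x.val + 1 ∨
      (x.val = m + 1 ∧ (x.val + 1) % (m + 2) = 0) := by
    rcases Nat.lt_or_ge (x.val + 1) (m + 2) with h | h
    · exact Or.inl (Nat.mod_eq_of_lt h)
    · have hx1 : x.val + 1 = m + 2 := by omega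
      exact Or.inr ⟨by omega, by rw [hx1, Nat.mod_self]⟩
  have : dd x (finRotate (m + 2) x) = 1 := by
    rw [hrot]; unfold dd; rw [hval]
    rcases hcase with h | ⟨h1, h2⟩ <;> split <;> omega
  omega

lemma orient_step {π : Equiv.Perm (Fin n)} (hor : Orient π) {a w : Fin n}
    (hsc : π.SameCycle a w) (haw : a ≠ w) (hpaw : π a ≠ w) :
    dd w a < dd w (π a) := by
  have hpa : π a ≠ a := by
    intro h
    exact haw (fixed_sc h hsc).symm
  have h1 : dd a (π a) ≤ dd a w := hor a w hsc (Ne.symm haw)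
  have h2 : dd a (π a) ≠ dd a w := fun h => hpaw (dd_inj h)
  have h4 : dd a w = n - dd w a := dd_rev (Ne.symm haw)
  have h7 : dd w a ≠ 0 := fun h => haw ((dd_eq_zero_iff w a).mp h).symm
  have h8 : dd a (π a) ≠ 0 := fun h => hpa ((dd_eq_zero_iff a (π a)).mp h).symm
  have hwlt := dd_lt w a
  have h5 : dd w a + dd a (π a) < n := by omega
  have h6 : dd w (π a) = dd w a + dd a (π a) := dd_add_lt h5
  omega

lemma descent_at {σ : Equiv.Perm (Fin n)} {u v : Fin n}
    (hsc : ¬σ.SameCycle u v) (hor : Orient (σ * Equiv.swap u v)) :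
    ∀ y, σ.SameCycle u y → y ≠ u → dd u (σ u) ≤ dd u y := by
  classical
  set π := σ * Equiv.swap u v with hπ
  have H : ∀ m, 1 ≤ m → (∀ s, 1 ≤ s → s ≤ m → (σ ^ s) u ≠ u) →
      dd u (σ u) ≤ dd u ((σ ^ m) u) := by
    intro m
    induction m with
    | zero => intro h; exact absurd h (by omega)
    | succ m ih =>
      intro _ hs
      by_cases hm0 : m = 0
      · subst hm0; rw [pow_one]
      · have ihm := ih (by omega) (fun s h1 h2 => hs s h1 (by omega))
        set a := (σ ^ m) u with ha
        have hau : a ≠ u := hs m (by omega) (by omega)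
        have hscua : σ.SameCycle u a := sc_pow_self σ m u
        have hav : a ≠ v := fun h => hsc (h ▸ hscua)
        have hπa : π a = (σ ^ (m+1)) u := by
          rw [hπ, pi_app_other σ hau hav, pow_apply_succ]
        have hπsc : π.SameCycle a u := (hπ ▸ merge_m7 hsc u a hscua).symm
        have h1 : π a ≠ u := by rw [hπa]; exact hs (m+1) (by omega) le_rfl
        have h2 := orient_step hor hπsc hau h1
        rw [hπa] at h2
        omega
  intro y hy hyne
  obtain ⟨m0, hm01, -, hm0⟩ := hy.exists_pow_eq''
  have hP : ∃ m, 1 ≤ m ∧ (σ ^ m) u = y := ⟨m0, hm01, hm0⟩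
  set m := Nat.find hP with hm
  obtain ⟨hm1, hmy⟩ := Nat.find_spec hP
  have hnr : ∀ s, 1 ≤ s → s ≤ m → (σ ^ s) u ≠ u := by
    intro s h1 h2 hu
    rcases Nat.eq_or_lt_of_le h2 with rfl | h2
    · exact hyne (by rw [← hmy, hu])
    · have h3 : (σ ^ (m - s)) u = y := by
        rw [← hu, ← Equiv.Perm.mul_apply, ← pow_add,
          Nat.sub_add_cancel (le_of_lt h2), hmy]
      exact Nat.find_min hP (by omega : m - s < m) ⟨by omega, h3⟩
  rw [← hmy]
  exact H m hm1 hnr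

lemma descent {σ : Equiv.Perm (Fin n)} {u v : Fin n} (huv : u ≠ v)
    (hsc : ¬σ.SameCycle u v) (hor : Orient (σ * Equiv.swap u v)) : Orient σ := by
  intro x y hxy hyx
  by_cases hxu : x = u
  · subst hxu; exact descent_at hsc hor y hxy hyx
  by_cases hxv : x = v
  · have hor' : Orient (σ * Equiv.swap v u) := by rwa [Equiv.swap_comm v u]
    rw [hxv]
    exact descent_at (fun h => hsc h.symm) hor' y (hxv ▸ hxy) (hxv ▸ hyx)
  · have hπx : (σ * Equiv.swap u v) x = σ x := pi_app_other σ hxu hxv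
    have h := hor x y (merge_m7 hsc x y hxy) hyx
    rwa [hπx] at h

end orient
section rotatecount
variable {n : ℕ}

lemma dd_sub {a b c : Fin n} (h : dd a b ≤ dd a c) : dd b c = dd a c - dd a b := by
  have := a.isLt; have := b.isLt; have := c.isLt
  unfold dd at *
  split at h <;> split at h <;> split <;> omega

lemma finRotate_ne {m : ℕ} (x : Fin (m + 2)) : finRotate (m + 2) x ≠ x := by
  rw [finRotate_succ_apply]
  intro h
  have h2 : ((x + 1 : Fin (m + 2))).val = (x.val + 1) % (m + 2) := by
    rw [Fin.val_add]; simp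
  have hx := x.isLt
  rw [Fin.ext_iff, h2] at h
  rcases Nat.lt_or_ge (x.val + 1) (m + 2) with h' | h'
  · rw [Nat.mod_eq_of_lt h'] at h; omega
  · have hx1 : x.val + 1 = m + 2 := by omega
    rw [hx1, Nat.mod_self] at h; omega

lemma cycleCount_finRotate (hn : 2 ≤ n) : cycleCount (finRotate n) = 1 := by
  obtain ⟨m, rfl⟩ : ∃ m, n = m + 2 := ⟨n - 2, by omega⟩
  have hall : ∀ x y : Fin (m + 2), (finRotate (m + 2)).SameCycle x y := fun x y =>
    isCycle_finRotate.sameCycle (finRotate_ne x) (finRotate_ne y)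
  have h : {x : Fin (m + 2) | ∀ y, (finRotate (m + 2)).SameCycle x y → x ≤ y}
      = {(0 : Fin (m + 2))} := by
    ext z
    simp only [Set.mem_setOf_eq, Set.mem_singleton_iff]
    constructor
    · intro hz
      exact le_antisymm (hz 0 (hall z 0)) (Fin.zero_le z)
    · rintro rfl y _
      exact Fin.zero_le y
  rw [cycleCount, h, Set.ncard_singleton]

lemma normPerm_finRotate (hn : 2 ≤ n) : normPerm (finRotate n) = n - 1 := by
  rw [normPerm, cycleCount_finRotate hn]

lemma orient_chain : ∀ L : List (Equiv.Perm (Fin n)), 2 ≤ n → (∀ τ ∈ L, τ.IsSwap) →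
    ∀ ρ, ρ * L.prod = finRotate n → normPerm ρ + L.length ≤ n - 1 → Orient ρ := by
  intro L
  induction L with
  | nil =>
    intro hn _ ρ hprod _
    rw [List.prod_nil, mul_one] at hprod
    rw [hprod]
    exact orient_finRotate hn
  | cons τ0 L ih =>
    intro hn hsw ρ hprod hle
    obtain ⟨u, v, huv, rfl⟩ := hsw τ0 (List.mem_cons_self)
    rw [List.prod_cons, ← mul_assoc] at hprod
    have hswL : ∀ τ ∈ L, τ.IsSwap := fun τ ht => hsw τ (List.mem_cons_of_mem _ ht)
    -- lower bounds via triangle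
    have ht1 := np_mul_list L hswL (ρ * Equiv.swap u v)
    rw [hprod] at ht1
    have hnpc : normPerm (finRotate n) = n - 1 := normPerm_finRotate hn
    have hstep := normPerm_swap_step huv ρ
    rw [List.length_cons] at hle
    -- np (ρ * swap u v) = np ρ + 1
    have hmerge : normPerm (ρ * Equiv.swap u v) = normPerm ρ + 1 := by omega
    have hnsc : ¬ρ.SameCycle u v := by
      intro hsc
      have := normPerm_split huv hsc
      omega
    have hor : Orient (ρ * Equiv.swap u v) :=
      ih hn hswL _ hprod (by omega)
    exact descent huv hnsc hor

end rotatecount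


section chains
variable {n k : ℕ} {τ : Fin k → Equiv.Perm (Fin n)}

lemma gammaP_succ {m : ℕ} (hm : m < k) :
    gammaP τ (m + 1) = gammaP τ m * τ ⟨m, hm⟩ := by
  unfold gammaP
  rw [List.prod_take_succ _ m (by rw [List.length_ofFn]; exact hm)]
  congr 1
  simp

lemma gammaP_top : gammaP τ k = (List.ofFn τ).prod := by
  unfold gammaP
  rw [List.take_of_length_le (le_of_eq (List.length_ofFn (f := τ)))]

lemma ofFn_swaps (hτ : ∀ l, (τ l).IsSwap) : ∀ ψ ∈ List.ofFn τ, ψ.IsSwap := by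
  intro ψ hψ
  obtain ⟨l, rfl⟩ := (List.mem_ofFn).mp hψ
  exact hτ l

lemma gammaP_decomp (m : ℕ) :
    (List.ofFn τ).prod = gammaP τ m * ((List.ofFn τ).drop m).prod := by
  unfold gammaP
  rw [← List.prod_append, List.take_append_drop]

lemma chain_norms (hτ : ∀ l, (τ l).IsSwap)
    (hk : normPerm (List.ofFn τ).prod = k) :
    ∀ m, m ≤ k → normPerm (gammaP τ m) = m := by
  intro m hm
  have hlen : (List.ofFn τ).length = k := List.length_ofFn (f := τ)
  have h1 := np_mul_list ((List.ofFn τ).take m)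
    (fun ψ hψ => ofFn_swaps hτ ψ (List.mem_of_mem_take hψ)) 1
  rw [one_mul, normPerm_one, List.length_take, hlen] at h1
  have h2 := np_mul_list ((List.ofFn τ).drop m)
    (fun ψ hψ => ofFn_swaps hτ ψ (List.mem_of_mem_drop hψ)) (gammaP τ m)
  rw [← gammaP_decomp m, List.length_drop, hlen, hk] at h2
  have : normPerm (gammaP τ m) = normPerm (((List.ofFn τ).take m)).prod := rfl
  rw [this] at h2 ⊢
  omega

end chains

/-- If γ = ((i₁ j₁),…,(i_k j_k)) ∈ Σ_n(k) and l ∈ {1,…,k}, then every element of the cycle of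
γ_{l−1} containing j_l is > i_l, and i_l is the largest element of its own cycle in γ_{l−1}
with this property. -/
theorem stmt3 (n k : ℕ) (i j : Fin k → Fin n) (hij : ∀ l, i l < j l)
    (hγ : (fun l => Equiv.swap (i l) (j l)) ∈ SigmaSet n k) (l : Fin k) :
    (∀ y, (gammaP (fun m => Equiv.swap (i m) (j m)) (l : ℕ)).SameCycle (j l) y → i l < y) ∧
    (∀ x, (gammaP (fun m => Equiv.swap (i m) (j m)) (l : ℕ)).SameCycle (i l) x →
      (∀ y, (gammaP (fun m => Equiv.swap (i m) (j m)) (l : ℕ)).SameCycle (j l) y → x < y) →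
      x ≤ i l) := by
  classical
  obtain ⟨hsw, hnorm, hprec⟩ := hγ
  set τf : Fin k → Equiv.Perm (Fin n) := fun m => Equiv.swap (i m) (j m) with hτf
  set σ := gammaP τf (l : ℕ) with hσ
  have hijl : (i l).val < (j l).val := hij l
  have hjlt := (j l).isLt
  have hilt := (i l).isLt
  have hn2 : 2 ≤ n := by omega
  have hlk := l.isLt
  have huv : i l ≠ j l := Fin.ne_of_lt (hij l)
  have hsucc : gammaP τf ((l : ℕ) + 1) = σ * Equiv.swap (i l) (j l) := by
    rw [gammaP_succ hlk]
  have hnp : ∀ m, m ≤ k → normPerm (gammaP τf m) = m := chain_norms hsw hnorm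
  have hnpσ : normPerm σ = (l : ℕ) := hnp (l : ℕ) (le_of_lt hlk)
  have hnpπ : normPerm (gammaP τf ((l : ℕ) + 1)) = (l : ℕ) + 1 := hnp _ hlk
  have hnsc : ¬σ.SameCycle (i l) (j l) := by
    intro hsc
    have hcon := normPerm_split huv hsc
    rw [← hsucc] at hcon
    omega
  -- orientation of γ_{l+1}
  have hnpc : normPerm (finRotate n) = n - 1 := normPerm_finRotate hn2
  rw [precLe, hnpc, hnorm] at hprec
  obtain ⟨L', hL'1, hL'2, hL'3⟩ :=
    desum (normPerm ((List.ofFn τf).prod⁻¹ * finRotate n)) _ rfl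
  set D := (List.ofFn τf).drop ((l : ℕ) + 1) with hD
  have horπ : Orient (gammaP τf ((l : ℕ) + 1)) := by
    refine orient_chain (D ++ L') hn2 ?_ _ ?_ ?_
    · intro ψ hψ
      rcases List.mem_append.mp hψ with h | h
      · exact ofFn_swaps hsw ψ (List.mem_of_mem_drop h)
      · exact hL'1 ψ h
    · rw [List.prod_append, ← mul_assoc, ← gammaP_decomp ((l : ℕ) + 1), hL'3,
        mul_inv_cancel_left]
    · rw [List.length_append, List.length_drop, List.length_ofFn, hL'2, hnpπ]
      omega
  rw [hsucc] at horπ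
  set π := σ * Equiv.swap (i l) (j l) with hπ
  -- Fact 1 : i l is the closest predecessor in its cycle of j l
  have fact1 : ∀ z, σ.SameCycle (i l) z → dd (i l) (j l) ≤ dd z (j l) := by
    intro z hz
    obtain ⟨z0, hz0mem, hz0min⟩ := Finset.exists_min_image
      (Finset.univ.filter (fun w => σ.SameCycle (i l) w)) (fun w => dd w (j l))
      ⟨i l, Finset.mem_filter.mpr ⟨Finset.mem_univ _, Equiv.Perm.SameCycle.refl _ _⟩⟩
    have hz0sc : σ.SameCycle (i l) z0 := (Finset.mem_filter.mp hz0mem).2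
    have hmin : ∀ w, σ.SameCycle (i l) w → dd z0 (j l) ≤ dd w (j l) := fun w hw =>
      hz0min w (Finset.mem_filter.mpr ⟨Finset.mem_univ _, hw⟩)
    by_cases h0 : z0 = i l
    · rw [h0] at hmin
      exact hmin z hz
    · exfalso
      have hz0v : z0 ≠ j l := fun hh => hnsc (hh ▸ hz0sc)
      have hπz0 : π z0 = σ z0 := pi_app_other σ h0 hz0v
      have hπsc : π.SameCycle z0 (j l) := (merge_m2 hnsc z0 hz0sc).symm
      have h1 : dd z0 (π z0) ≤ dd z0 (j l) := horπ z0 (j l) hπsc (Ne.symm hz0v)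
      rw [hπz0] at h1
      have hσz0ne : σ z0 ≠ z0 := by
        intro hh
        exact h0 (fixed_sc hh hz0sc.symm).symm
      have hσz0sc : σ.SameCycle (i l) (σ z0) :=
        Equiv.Perm.sameCycle_apply_right.mpr hz0sc
      have hσz0j : σ z0 ≠ j l := fun hh => hnsc (hh ▸ hσz0sc)
      have h2 : dd z0 (σ z0) < dd z0 (j l) :=
        lt_of_le_of_ne h1 (fun hh => hσz0j (dd_inj hh))
      have h3 : dd (σ z0) (j l) = dd z0 (j l) - dd z0 (σ z0) := dd_sub h1
      have h4 : dd z0 (σ z0) ≠ 0 := fun hh => hσz0ne ((dd_eq_zero_iff _ _).mp hh).symm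
      have h5 := hmin (σ z0) hσz0sc
      omega
  -- Fact 2 : j l is the closest predecessor in its cycle of i l
  have fact2 : ∀ z, σ.SameCycle (j l) z → dd (j l) (i l) ≤ dd z (i l) := by
    intro z hz
    obtain ⟨z0, hz0mem, hz0min⟩ := Finset.exists_min_image
      (Finset.univ.filter (fun w => σ.SameCycle (j l) w)) (fun w => dd w (i l))
      ⟨j l, Finset.mem_filter.mpr ⟨Finset.mem_univ _, Equiv.Perm.SameCycle.refl _ _⟩⟩
    have hz0sc : σ.SameCycle (j l) z0 := (Finset.mem_filter.mp hz0mem).2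
    have hmin : ∀ w, σ.SameCycle (j l) w → dd z0 (i l) ≤ dd w (i l) := fun w hw =>
      hz0min w (Finset.mem_filter.mpr ⟨Finset.mem_univ _, hw⟩)
    by_cases h0 : z0 = j l
    · rw [h0] at hmin
      exact hmin z hz
    · exfalso
      have hz0u : z0 ≠ i l := fun hh => hnsc ((hh ▸ hz0sc).symm)
      have hπz0 : π z0 = σ z0 := pi_app_other σ hz0u h0
      have hπsc : π.SameCycle z0 (i l) := (merge_m1 hnsc z0 hz0sc).symm
      have h1 : dd z0 (π z0) ≤ dd z0 (i l) := horπ z0 (i l) hπsc (Ne.symm hz0u)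
      rw [hπz0] at h1
      have hσz0ne : σ z0 ≠ z0 := by
        intro hh
        exact h0 (fixed_sc hh hz0sc.symm).symm
      have hσz0sc : σ.SameCycle (j l) (σ z0) :=
        Equiv.Perm.sameCycle_apply_right.mpr hz0sc
      have hσz0i : σ z0 ≠ i l := fun hh => hnsc ((hh ▸ hσz0sc).symm)
      have h2 : dd z0 (σ z0) < dd z0 (i l) :=
        lt_of_le_of_ne h1 (fun hh => hσz0i (dd_inj hh))
      have h3 : dd (σ z0) (i l) = dd z0 (i l) - dd z0 (σ z0) := dd_sub h1
      have h4 : dd z0 (σ z0) ≠ 0 := fun hh => hσz0ne ((dd_eq_zero_iff _ _).mp hh).symm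
      have h5 := hmin (σ z0) hσz0sc
      omega
  constructor
  · -- claim 1
    intro y hy
    have hyi : y ≠ i l := fun hh => hnsc ((hh ▸ hy).symm)
    have h2 := fact2 y hy
    have hylt := y.isLt
    rw [Fin.lt_def]
    by_contra hcon
    push_neg at hcon
    have hyv : y.val ≠ (i l).val := fun hh => hyi (Fin.ext hh)
    unfold dd at h2
    split_ifs at h2 <;> omega
  · -- claim 2
    intro x hx hlt
    have hxj : x.val < (j l).val := Fin.lt_def.mp (hlt (j l) (Equiv.Perm.SameCycle.refl _ _))
    have h1 := fact1 x hx
    rw [Fin.le_def]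
    unfold dd at h1
    split_ifs at h1 <;> omega
end
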